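/- arXiv:2001.00992 — 6 statements merged into one kernel-verified Lean document; each statement's English description precedes it below -/
import Mathlib

section
/- Let G be a graph with matching number m and connectivity κ ≥ 2 satisfying m ≤ κ. If G is not Hamiltonian, C is a longest cycle in G, x₀ ∉ V(C), and P₁,...,Pₛ are internally disjoint paths from x₀ to V(C) with endpoints u₁,...,uₛ on C (s ≥ κ), then the set {x₀, u₁⁺, u₂⁺, ..., uₛ⁺} is independent in G, where uᵢ⁺ denotes the successor of uᵢ along a fixed orientation of C. -/
open SimpleGraph Finset

/-- The matching number of a graph: the largest size of a matching. -/
noncomputable def matchingNumber {V : Type*} [Fintype V] (G : SimpleGraph V) : ℕ :=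
  sSup {n | ∃ M : G.Subgraph, M.IsMatching ∧ M.edgeSet.ncard = n}

/-- The vertex connectivity of a finite graph: the least size of a set `S` of vertices
whose removal either disconnects the graph or leaves at most one vertex. -/
noncomputable def vertexConnectivity {V : Type*} [Fintype V] (G : SimpleGraph V) : ℕ :=
  sInf {k | ∃ S : Finset V, S.card = k ∧
    (¬ (G.induce ((↑S : Set V)ᶜ)).Connected ∨ Fintype.card V ≤ k + 1)}

/-- `b` is the successor of `a` along the closed walk `c` (with its fixed orientation). -/
def IsCycleSucc {V : Type*} {G : SimpleGraph V} {v : V} (c : G.Walk v v) (a b : V) : Prop :=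
  ∃ k < c.length, c.getVert k = a ∧ c.getVert (k + 1) = b

/-- The family `F` of graphs `H` with `K_{p,q} ⊆ H ⊆ K_p ∨ (q·K_1)` for some `q ≥ p + 1 ≥ 3`:
the vertices split into a set `P` of size `p ≥ 2` and a set `Q` of size `q ≥ p + 1` such that
all `P`–`Q` edges are present and `Q` is independent. -/
def inFamilyF {V : Type*} [Fintype V] [DecidableEq V] (G : SimpleGraph V) : Prop :=
  ∃ P Q : Finset V, P ∪ Q = Finset.univ ∧ Disjoint P Q ∧
    Q.card ≥ P.card + 1 ∧ P.card ≥ 2 ∧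
    (∀ a ∈ P, ∀ b ∈ Q, G.Adj a b) ∧
    (∀ a ∈ Q, ∀ b ∈ Q, ¬ G.Adj a b)

set_option linter.unusedSectionVars false

namespace CycleAux

open SimpleGraph Walk

variable {V : Type*} [DecidableEq V] {G : SimpleGraph V}

lemma getVert_injOn' {x y : V} {p : G.Walk x y} (hp : p.IsPath) :
    ∀ m, m ≤ p.length → ∀ n, n ≤ p.length → p.getVert m = p.getVert n → m = n := by
  induction p with
  | nil => intro m hm n hn _; simp at hm hn; omega
  | cons h q ih =>
    rw [Walk.cons_isPath_iff] at hp
    intro m hm n hn hmn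
    match m, n with
    | 0, 0 => rfl
    | 0, n+1 =>
      exfalso
      apply hp.2
      rw [Walk.mem_support_iff_exists_getVert]
      refine ⟨n, ?_, by simpa using hn⟩
      rw [Walk.getVert_cons_succ] at hmn
      rw [← hmn, Walk.getVert_zero]
    | m+1, 0 =>
      exfalso
      apply hp.2
      rw [Walk.mem_support_iff_exists_getVert]
      refine ⟨m, ?_, by simpa using hm⟩
      rw [Walk.getVert_cons_succ] at hmn
      rw [hmn, Walk.getVert_zero]
    | m+1, n+1 =>
      have := ih hp.1 m (by simpa using hm) n (by simpa using hn)
        (by simpa [Walk.getVert_cons_succ] using hmn)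
      omega

lemma length_eq_one_of_mem_edges {x y : V} {p : G.Walk x y} (hp : p.IsPath)
    (he : s(x, y) ∈ p.edges) : p.length = 1 := by
  induction p with
  | nil => simp at he
  | cons h q ih =>
    rw [Walk.cons_isPath_iff] at hp
    rw [Walk.edges_cons, List.mem_cons] at he
    rcases he with he | he
    · rw [Sym2.eq_iff] at he
      rcases he with ⟨-, hyw⟩ | ⟨hxw, -⟩
      · subst hyw
        have hq := (Walk.isPath_iff_eq_nil (p := q)).mp hp.1
        simp [hq]
      · exact absurd hxw h.ne
    · exact absurd (q.fst_mem_support_of_mem_edges he) hp.2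

lemma isPath_append' {x y z : V} {p : G.Walk x y} {q : G.Walk y z} (hp : p.IsPath) (hq : q.IsPath)
    (h : ∀ w, w ∈ p.support → w ∈ q.support → w = y) : (p.append q).IsPath := by
  rw [Walk.isPath_def, Walk.support_append, List.nodup_append]
  have hqn := hq.support_nodup
  rw [q.support_eq_cons, List.nodup_cons] at hqn
  refine ⟨hp.support_nodup, hqn.2, ?_⟩
  intro w hwp w' hwq hww'
  rw [← hww'] at hwq
  have hwy : w = y := h w hwp (List.mem_of_mem_tail hwq)
  subst hwy
  exact hqn.1 hwq

lemma isCycleSucc_swap {x y a b : V} (t : G.Walk x y) (r : G.Walk y x)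
    (h : IsCycleSucc (t.append r) a b) : IsCycleSucc (r.append t) a b := by
  obtain ⟨k, hk, ha, hb⟩ := h
  rw [Walk.length_append] at hk
  by_cases hlt : k < t.length
  · refine ⟨r.length + k, ?_, ?_, ?_⟩
    · rw [Walk.length_append]; omega
    · rw [Walk.getVert_append, if_neg (by omega), Nat.add_sub_cancel_left]
      rwa [Walk.getVert_append, if_pos hlt] at ha
    · rw [Walk.getVert_append, if_neg (by omega)]
      have h4 : r.length + k + 1 - r.length = k + 1 := by omega
      rw [h4]
      rw [Walk.getVert_append] at hb
      by_cases h2 : k + 1 < t.length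
      · rwa [if_pos h2] at hb
      · have hk1 : k + 1 = t.length := by omega
        rw [if_neg (by omega), hk1, Nat.sub_self, Walk.getVert_zero] at hb
        rw [hk1, Walk.getVert_length]
        exact hb
  · refine ⟨k - t.length, by rw [Walk.length_append]; omega, ?_, ?_⟩
    · rw [Walk.getVert_append, if_pos (by omega)]
      rwa [Walk.getVert_append, if_neg hlt] at ha
    · rw [Walk.getVert_append]
      rw [Walk.getVert_append, if_neg (by omega)] at hb
      by_cases h2 : k - t.length + 1 < r.length
      · rw [if_pos h2]
        have h4 : k + 1 - t.length = k - t.length + 1 := by omega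
        rwa [h4] at hb
      · rw [if_neg h2]
        have h3 : k - t.length + 1 = r.length := by omega
        rw [h3, Nat.sub_self, Walk.getVert_zero]
        have h4 : k + 1 - t.length = r.length := by omega
        rw [h4, Walk.getVert_length] at hb
        exact hb

lemma isCycleSucc_rotate {x y a b : V} {c : G.Walk x x} (hy : y ∈ c.support)
    (h : IsCycleSucc c a b) : IsCycleSucc (c.rotate y hy) a b := by
  have hspec := c.take_spec hy
  rw [← hspec] at h
  exact isCycleSucc_swap _ _ h

lemma length_rotate' {x y : V} (c : G.Walk x x) (hy : y ∈ c.support) :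
    (c.rotate y hy).length = c.length := by
  have h := congrArg Walk.length (c.take_spec hy)
  rw [Walk.length_append] at h
  show ((c.dropUntil y hy).append (c.takeUntil y hy)).length = c.length
  rw [Walk.length_append]; omega

lemma mem_rotate_support {x y w : V} {c : G.Walk x x} (hy : y ∈ c.support) :
    w ∈ (c.rotate y hy).support ↔ w ∈ c.support := by
  constructor
  · intro hw
    rcases (Walk.mem_support_iff _).mp hw with rfl | hw
    · exact hy
    · exact List.mem_of_mem_tail ((Walk.support_rotate c y hy).mem_iff.mp hw)
  · intro hw
    rcases (Walk.mem_support_iff _).mp hw with rfl | hw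
    · show w ∈ ((c.dropUntil y hy).append (c.takeUntil y hy)).support
      rw [Walk.mem_support_append_iff]
      exact Or.inl (Walk.end_mem_support _)
    · exact List.mem_of_mem_tail ((Walk.support_rotate c y hy).mem_iff.mpr hw)

lemma tail_isPath {x : V} {d : G.Walk x x} (hd : d.IsCycle) : d.tail.IsPath := by
  have hnil := hd.not_nil
  rw [← Walk.cons_tail_eq d hnil] at hd
  exact ((Walk.cons_isCycle_iff _ _).mp hd).1

lemma getVert_one_of_isCycleSucc {x b : V} {d : G.Walk x x} (hd : d.IsCycle)
    (h : IsCycleSucc d x b) : d.getVert 1 = b := by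
  obtain ⟨k, hk, ha, hb⟩ := h
  have hnil : ¬ d.Nil := hd.not_nil
  have htp : d.tail.IsPath := tail_isPath hd
  have hk0 : k = 0 := by
    by_contra hk0
    have h1 : d.tail.getVert (k - 1) = x := by
      rw [Walk.getVert_tail _]
      have h2 : k - 1 + 1 = k := by omega
      rw [h2]; exact ha
    have h2 : d.tail.getVert d.tail.length = x := Walk.getVert_length _
    have hlen : d.tail.length + 1 = d.length := Walk.length_tail_add_one hnil
    have := getVert_injOn' htp (k-1) (by omega) d.tail.length (le_refl _) (h1.trans h2.symm)
    omega
  subst hk0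
  simpa using hb


set_option linter.unusedSectionVars false

lemma caseA {x₀ v ui usi : V} {c : G.Walk v v} (hc : c.IsCycle)
    (hlong : ∀ (w : V) (d : G.Walk w w), d.IsCycle → d.length ≤ c.length)
    (hx₀ : x₀ ∉ c.support) (hui : ui ∈ c.support)
    (p : G.Walk x₀ ui) (hp : p.IsPath)
    (honC : ∀ w ∈ p.support, w ∈ c.support → w = ui)
    (hs : IsCycleSucc c ui usi) (hadj : G.Adj x₀ usi) : False := by
  set d := c.rotate ui hui with hd
  have hdc : d.IsCycle := hc.rotate hui
  have hnil : ¬ d.Nil := hdc.not_nil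
  have hdlen : d.length = c.length := length_rotate' c hui
  have h1 : d.getVert 1 = usi := getVert_one_of_isCycleSucc hdc (isCycleSucc_rotate hui hs)
  have htp : d.tail.IsPath := tail_isPath hdc
  set q : G.Walk usi ui := d.tail.copy h1 rfl with hq
  have hqp : q.IsPath := by rw [hq, Walk.isPath_copy]; exact htp
  have hqsub : ∀ w ∈ q.support, w ∈ c.support := by
    intro w hw
    rw [hq, Walk.support_copy, Walk.support_tail_of_not_nil d hnil] at hw
    exact (mem_rotate_support hui).mp (List.mem_of_mem_tail hw)
  have hqlen : q.length + 1 = c.length := by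
    rw [hq, Walk.length_copy, ← hdlen]; exact Walk.length_tail_add_one hnil
  have hplen : p.length ≠ 0 := by
    intro h0
    have hxn : x₀ = ui := (Walk.nil_iff_length_eq.mpr h0).eq
    rw [hxn] at hx₀
    exact hx₀ hui
  have hrest : (q.append p.reverse).IsPath := by
    apply isPath_append' hqp hp.reverse
    intro w hw hw2
    rw [Walk.support_reverse, List.mem_reverse] at hw2
    exact honC w hw2 (hqsub w hw)
  have hW : (Walk.cons hadj (q.append p.reverse)).IsCycle := by
    rw [Walk.cons_isCycle_iff]
    refine ⟨hrest, fun hmem => ?_⟩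
    have hle := length_eq_one_of_mem_edges hrest (by rwa [Sym2.eq_swap] at hmem)
    rw [Walk.length_append, Walk.length_reverse] at hle
    have h3 := hc.three_le_length
    omega
  have hle := hlong x₀ _ hW
  rw [Walk.length_cons, Walk.length_append, Walk.length_reverse] at hle
  have h3 := hc.three_le_length
  omega

lemma caseB {x₀ v ui uj usi usj : V} {c : G.Walk v v} (hc : c.IsCycle)
    (hlong : ∀ (w : V) (d : G.Walk w w), d.IsCycle → d.length ≤ c.length)
    (hx₀ : x₀ ∉ c.support)
    (hui : ui ∈ c.support) (huj : uj ∈ c.support) (hne : ui ≠ uj)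
    (pi : G.Walk x₀ ui) (hpi : pi.IsPath)
    (pj : G.Walk x₀ uj) (hpj : pj.IsPath)
    (hdisj : ∀ w, w ∈ pi.support → w ∈ pj.support → w = x₀)
    (honCi : ∀ w ∈ pi.support, w ∈ c.support → w = ui)
    (honCj : ∀ w ∈ pj.support, w ∈ c.support → w = uj)
    (hsi : IsCycleSucc c ui usi) (hsj : IsCycleSucc c uj usj)
    (hadj : G.Adj usi usj) : False := by
  set d := c.rotate ui hui with hd
  have hdc : d.IsCycle := hc.rotate hui
  have hnil : ¬ d.Nil := hdc.not_nil
  have hdlen : d.length = c.length := length_rotate' c hui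
  have h1 : d.getVert 1 = usi := getVert_one_of_isCycleSucc hdc (isCycleSucc_rotate hui hsi)
  have htp : d.tail.IsPath := tail_isPath hdc
  set q : G.Walk usi ui := d.tail.copy h1 rfl with hq
  have hqp : q.IsPath := by rw [hq, Walk.isPath_copy]; exact htp
  have hqsupp : q.support = d.support.tail := by
    rw [hq, Walk.support_copy, Walk.support_tail_of_not_nil d hnil]
  have hqsub : ∀ w ∈ q.support, w ∈ c.support := by
    intro w hw
    rw [hqsupp] at hw
    exact (mem_rotate_support hui).mp (List.mem_of_mem_tail hw)
  have hqlen : q.length + 1 = c.length := by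
    rw [hq, Walk.length_copy, ← hdlen]; exact Walk.length_tail_add_one hnil
  have hjq : uj ∈ q.support := by
    rw [hqsupp]
    have hjd : uj ∈ d.support := (mem_rotate_support hui).mpr huj
    rcases (Walk.mem_support_iff _).mp hjd with h' | h'
    · exact absurd h'.symm hne
    · exact h'
  set e := q.takeUntil uj hjq with he
  set f := q.dropUntil uj hjq with hf
  have hef : e.append f = q := q.take_spec hjq
  have hep : e.IsPath := hqp.takeUntil hjq
  have hfp : f.IsPath := hqp.dropUntil hjq
  -- f.getVert 1 = usj
  obtain ⟨k, hk, hka, hkb⟩ := isCycleSucc_rotate hui hsj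
  have hk0 : k ≠ 0 := by
    intro h0; subst h0; rw [Walk.getVert_zero] at hka; exact hne hka
  have hq_k1 : q.getVert k = usj := by
    rw [hq, Walk.getVert_copy, Walk.getVert_tail _]; exact hkb
  have hq_k : q.getVert (k - 1) = uj := by
    rw [hq, Walk.getVert_copy, Walk.getVert_tail _]
    have h2 : k - 1 + 1 = k := by omega
    rw [h2]; exact hka
  have helen_le : e.length ≤ q.length := q.length_takeUntil_le hjq
  have heq : q.getVert e.length = uj := by
    conv_lhs => rw [← hef]
    rw [Walk.getVert_append, if_neg (lt_irrefl _), Nat.sub_self, Walk.getVert_zero]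
  have hkc : k < c.length := hdlen ▸ hk
  have hklen : k - 1 ≤ q.length := by omega
  have hke : e.length = k - 1 :=
    getVert_injOn' hqp e.length helen_le (k-1) hklen (heq.trans hq_k.symm)
  have hf1 : f.getVert 1 = usj := by
    have h5 : q.getVert (e.length + 1) = f.getVert 1 := by
      conv_lhs => rw [← hef]
      rw [Walk.getVert_append, if_neg (by omega), Nat.add_sub_cancel_left]
    rw [← h5, hke]
    have h6 : k - 1 + 1 = k := by omega
    rw [h6]; exact hq_k1
  have hfnil : ¬ f.Nil := Walk.not_nil_of_ne hne.symm
  set g : G.Walk usj ui := f.tail.copy hf1 rfl with hg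
  have hgp : g.IsPath := by rw [hg, Walk.isPath_copy]; exact hfp.tail
  have hfg : f.length = g.length + 1 := by
    rw [hg, Walk.length_copy]; exact (Walk.length_tail_add_one hfnil).symm
  have hgsupp : uj :: g.support = f.support := by
    rw [hg, Walk.support_copy]; exact Walk.cons_support_tail hfnil
  have hfg_tail : f.support.tail = g.support := by rw [← hgsupp, List.tail_cons]
  have hq_split : q.support = e.support ++ f.support.tail := by
    rw [← hef, Walk.support_append]
  have hnodup_split : (e.support ++ g.support).Nodup := by
    rw [← hfg_tail, ← hq_split]; exact hqp.support_nodup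
  have hdisj_eg : ∀ w ∈ e.support, w ∉ g.support := fun w hw hwg =>
    (List.nodup_append.mp hnodup_split).2.2 w hw w hwg rfl
  have hui_not_e : ui ∉ e.support := fun hw => hdisj_eg ui hw (Walk.end_mem_support g)
  have huj_not_g : uj ∉ g.support := by
    intro hw
    have h7 := hfp.support_nodup
    rw [← hgsupp, List.nodup_cons] at h7
    exact h7.1 hw
  have hesub : ∀ w ∈ e.support, w ∈ c.support := fun w hw =>
    hqsub w (q.support_takeUntil_subset hjq hw)
  have hgsub : ∀ w ∈ g.support, w ∈ c.support := by
    intro w hw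
    exact hqsub w (q.support_dropUntil_subset hjq (hgsupp ▸ List.mem_cons_of_mem _ hw))
  have hpilen : pi.length ≠ 0 := by
    intro h0
    have hxn : x₀ = ui := (Walk.nil_iff_length_eq.mpr h0).eq
    rw [hxn] at hx₀; exact hx₀ hui
  have hpjlen : pj.length ≠ 0 := by
    intro h0
    have hxn : x₀ = uj := (Walk.nil_iff_length_eq.mpr h0).eq
    rw [hxn] at hx₀; exact hx₀ huj
  -- build the big path
  have hMp : (pi.append g.reverse).IsPath := by
    apply isPath_append' hpi hgp.reverse
    intro w hw hw2
    rw [Walk.support_reverse, List.mem_reverse] at hw2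
    exact honCi w hw (hgsub w hw2)
  have hNp : (pj.reverse.append (pi.append g.reverse)).IsPath := by
    apply isPath_append' hpj.reverse hMp
    intro w hw hw2
    rw [Walk.support_reverse, List.mem_reverse] at hw
    rw [Walk.mem_support_append_iff] at hw2
    rcases hw2 with hw2 | hw2
    · exact hdisj w hw2 hw
    · rw [Walk.support_reverse, List.mem_reverse] at hw2
      have h8 : w = uj := honCj w hw (hgsub w hw2)
      exact absurd (h8 ▸ hw2) huj_not_g
  have hrestp : (e.append (pj.reverse.append (pi.append g.reverse))).IsPath := by
    apply isPath_append' hep hNp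
    intro w hw hw2
    rw [Walk.mem_support_append_iff] at hw2
    rcases hw2 with hw2 | hw2
    · rw [Walk.support_reverse, List.mem_reverse] at hw2
      exact honCj w hw2 (hesub w hw)
    · rw [Walk.mem_support_append_iff] at hw2
      rcases hw2 with hw2 | hw2
      · have h9 : w = ui := honCi w hw2 (hesub w hw)
        exact absurd (h9 ▸ hw) hui_not_e
      · rw [Walk.support_reverse, List.mem_reverse] at hw2
        exact absurd hw2 (hdisj_eg w hw)
  have hrest_len : (e.append (pj.reverse.append (pi.append g.reverse))).length
      = e.length + (pj.length + (pi.length + g.length)) := by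
    simp [Walk.length_append, Walk.length_reverse]
  have helen_f : e.length + f.length = q.length := by
    have h10 := congrArg Walk.length hef
    rwa [Walk.length_append] at h10
  have hW : (Walk.cons hadj.symm (e.append (pj.reverse.append (pi.append g.reverse)))).IsCycle := by
    rw [Walk.cons_isCycle_iff]
    refine ⟨hrestp, fun hmem => ?_⟩
    have hle := length_eq_one_of_mem_edges hrestp (by rwa [Sym2.eq_swap] at hmem)
    rw [hrest_len] at hle
    omega
  have hle := hlong usj _ hW
  rw [Walk.length_cons, hrest_len] at hle
  omega

end CycleAux

/-- The set `{x₀, u₁⁺, …, uₛ⁺}` is independent in `G`. -/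
theorem stmt_1 {V : Type*} [Fintype V] [DecidableEq V] (G : SimpleGraph V)
    (hκ : 2 ≤ vertexConnectivity G)
    (hm : matchingNumber G ≤ vertexConnectivity G)
    (hnotham : ¬ G.IsHamiltonian)
    {v : V} (c : G.Walk v v) (hc : c.IsCycle)
    (hlong : ∀ (w : V) (d : G.Walk w w), d.IsCycle → d.length ≤ c.length)
    (x₀ : V) (hx₀ : x₀ ∉ c.support)
    (s : ℕ) (hs : vertexConnectivity G ≤ s)
    (u : Fin s → V) (huinj : Function.Injective u)
    (humem : ∀ i, u i ∈ c.support)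
    (P : ∀ i : Fin s, G.Walk x₀ (u i)) (hP : ∀ i, (P i).IsPath)
    (hdisj : ∀ i j, i ≠ j → ∀ w, w ∈ (P i).support → w ∈ (P j).support → w = x₀)
    (honC : ∀ i, ∀ w ∈ (P i).support, w ∈ c.support → w = u i)
    (usucc : Fin s → V) (hsucc : ∀ i, IsCycleSucc c (u i) (usucc i)) :
    ∀ a ∈ ({x₀} ∪ Set.range usucc : Set V), ∀ b ∈ ({x₀} ∪ Set.range usucc : Set V),
      ¬ G.Adj a b := by

  intro a ha b hb hadj
  simp only [Set.mem_union, Set.mem_singleton_iff, Set.mem_range] at ha hb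
  rcases ha with rfl | ⟨i, rfl⟩
  · rcases hb with rfl | ⟨i, rfl⟩
    · exact hadj.ne rfl
    · exact CycleAux.caseA hc hlong hx₀ (humem i) (P i) (hP i) (honC i) (hsucc i) hadj
  · rcases hb with rfl | ⟨j, rfl⟩
    · exact CycleAux.caseA hc hlong hx₀ (humem i) (P i) (hP i) (honC i) (hsucc i) hadj.symm
    · by_cases hij : i = j
      · subst hij; exact hadj.ne rfl
      · exact CycleAux.caseB hc hlong hx₀ (humem i) (humem j)
          (fun h => hij (huinj h)) (P i) (hP i) (P j) (hP j)
          (hdisj i j hij) (honC i) (honC j) (hsucc i) (hsucc j) hadj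
end

section
/- Let G be a non-Hamiltonian graph with connectivity κ ≥ 2 and matching number m ≤ κ. Let C be a longest cycle of G, x₀ a vertex outside C connected to C by s internally disjoint paths ending at distinct vertices u₁,...,uₛ ∈ V(C). Then s = κ = m, and the component of G − V(C) containing x₀ is the single vertex x₀. -/
open SimpleGraph Finset

namespace SimpleGraph.Walk
variable {V : Type*} {G : SimpleGraph V}

lemma getVert_mem_support' {u v : V} (p : G.Walk u v) (n : ℕ) : p.getVert n ∈ p.support := by
  induction p generalizing n with
  | nil => cases n <;> simp [getVert]
  | cons h q ih =>
    cases n with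
    | zero => simp [getVert]
    | succ n => rw [getVert_cons_succ]; exact List.mem_cons_of_mem _ (ih n)

lemma IsPath.getVert_inj' {u v : V} {p : G.Walk u v} (hp : p.IsPath) :
    ∀ {m n : ℕ}, m ≤ p.length → n ≤ p.length → p.getVert m = p.getVert n → m = n := by
  induction p with
  | nil => intro m n hm hn _; simp at hm hn; omega
  | cons h q ih =>
    intro m n hm hn hg
    rcases cons_isPath_iff _ _ |>.mp hp with ⟨hq, hnot⟩
    cases m with
    | zero =>
      cases n with
      | zero => rfl
      | succ n =>
        exfalso
        rw [getVert_zero, getVert_cons_succ] at hg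
        exact hnot (hg ▸ q.getVert_mem_support' n)
    | succ m =>
      cases n with
      | zero =>
        exfalso
        rw [getVert_zero, getVert_cons_succ] at hg
        exact hnot (hg ▸ q.getVert_mem_support' m)
      | succ n =>
        rw [getVert_cons_succ, getVert_cons_succ] at hg
        rw [length_cons] at hm hn
        have := ih hq (by omega) (by omega) hg
        omega

lemma length_eq_one_of_mem_edges {a b : V} {p : G.Walk a b} (hp : p.IsPath) (hab : a ≠ b)
    (h : s(a, b) ∈ p.edges) : p.length = 1 := by
  induction p with
  | nil => simp at h
  | @cons a c b h' q ih =>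
    rcases cons_isPath_iff _ _ |>.mp hp with ⟨hq, hnot⟩
    rw [edges_cons, List.mem_cons] at h
    rcases h with h | h
    · have hcb : c = b := by
        rw [Sym2.eq_iff] at h
        rcases h with ⟨-, h⟩ | ⟨h1, h2⟩
        · exact h.symm
        · exact absurd h2.symm hab
      subst hcb
      cases q with
      | nil => simp
      | @cons _ d _ h'' r =>
        exfalso
        rcases cons_isPath_iff _ _ |>.mp hq with ⟨-, hnot2⟩
        exact hnot2 r.end_mem_support
    · exact absurd (q.fst_mem_support_of_mem_edges h) hnot

lemma IsPath.append_of_meet {a b d : V} {p : G.Walk a b} {q : G.Walk b d}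
    (hp : p.IsPath) (hq : q.IsPath)
    (hmeet : ∀ x, x ∈ p.support → x ∈ q.support → x = b) : (p.append q).IsPath := by
  apply IsPath.mk'
  rw [support_append]
  have hqtail : b ∉ q.support.tail := by
    have := hq.support_nodup
    rw [q.support_eq_cons] at this
    exact (List.nodup_cons.mp this).1
  refine List.Nodup.append hp.support_nodup ?_ ?_
  · have := hq.support_nodup
    rw [q.support_eq_cons] at this
    exact (List.nodup_cons.mp this).2
  · intro x hxp hxq
    have hxq' : x ∈ q.support := List.mem_of_mem_tail hxq
    have := hmeet x hxp hxq'
    subst this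
    exact hqtail hxq

lemma isCycle_append' {a b : V} {p : G.Walk a b} {q : G.Walk b a}
    (hp : p.IsPath) (hq : q.IsPath) (hab : a ≠ b) (hpl : 2 ≤ p.length)
    (hmeet : ∀ x, x ∈ p.support → x ∈ q.support → x = a ∨ x = b) :
    (p.append q).IsCycle := by
  have hedis : ∀ e ∈ p.edges, e ∉ q.edges := by
    intro e hep heq
    induction e with
    | h x y =>
      have hxp : x ∈ p.support := p.fst_mem_support_of_mem_edges hep
      have hyp : y ∈ p.support := p.snd_mem_support_of_mem_edges hep
      have hxq : x ∈ q.support := q.fst_mem_support_of_mem_edges heq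
      have hyq : y ∈ q.support := q.snd_mem_support_of_mem_edges heq
      have hxy : G.Adj x y := p.adj_of_mem_edges hep
      have heab : s(x, y) = s(a, b) := by
        rcases hmeet x hxp hxq with rfl | rfl <;> rcases hmeet y hyp hyq with rfl | rfl
        · exact absurd rfl hxy.ne
        · rfl
        · rw [Sym2.eq_swap]
        · exact absurd rfl hxy.ne
      have := length_eq_one_of_mem_edges hp hab (heab ▸ hep)
      omega
  rw [isCycle_def]
  refine ⟨?_, ?_, ?_⟩
  · rw [isTrail_def, edges_append]
    exact List.Nodup.append hp.isTrail.edges_nodup hq.isTrail.edges_nodup hedis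
  · intro hnil
    have := congrArg Walk.length hnil
    rw [length_append, length_nil] at this
    omega
  · rw [tail_support_append]
    have hpt : a ∉ p.support.tail := by
      have := hp.support_nodup
      rw [p.support_eq_cons] at this
      exact (List.nodup_cons.mp this).1
    have hqt : b ∉ q.support.tail := by
      have := hq.support_nodup
      rw [q.support_eq_cons] at this
      exact (List.nodup_cons.mp this).1
    refine List.Nodup.append (hp.support_nodup.tail) (hq.support_nodup.tail) ?_
    intro x hxp hxq
    rcases hmeet x (List.mem_of_mem_tail hxp) (List.mem_of_mem_tail hxq) with rfl | rfl
    · exact hpt hxp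
    · exact hqt hxq

variable [DecidableEq V]

lemma takeUntil_start {u w : V} (p : G.Walk u w) (h : u ∈ p.support) :
    p.takeUntil u h = Walk.nil := by
  cases p with
  | nil => rfl
  | cons r q => simp [takeUntil]

lemma length_rotate' {v : V} {c : G.Walk v v} {a : V} (ha : a ∈ c.support) :
    (c.rotate a ha).length = c.length := by
  rw [rotate, length_append, Nat.add_comm, ← length_append, take_spec]

lemma rotate_getVert_one {v : V} {c : G.Walk v v} (hc : 0 < c.length) {a : V}
    (ha : a ∈ c.support) :
    ∃ k < c.length, c.getVert k = a ∧ (c.rotate a ha).getVert 1 = c.getVert (k + 1) := by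
  have hspec : (c.takeUntil a ha).append (c.dropUntil a ha) = c := c.take_spec ha
  set p := c.takeUntil a ha with hp
  set q := c.dropUntil a ha with hqdef
  have hlen : p.length + q.length = c.length := by rw [← length_append, hspec]
  have hq1 : 0 < q.length := by
    rcases Nat.eq_zero_or_pos q.length with h0 | h
    · exfalso
      have hav : a = v := by
        have h1 := q.getVert_zero
        have h2 := q.getVert_of_length_le (i := 0) (by omega)
        rw [h1] at h2; exact h2
      subst hav
      have : p = Walk.nil := takeUntil_start c ha
      rw [this] at hlen
      simp at hlen
      omega
    · exact h
  refine ⟨p.length, by omega, ?_, ?_⟩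
  · conv_lhs => rw [← hspec]
    rw [getVert_append]
    simp [q.getVert_zero]
  · have hrot : c.rotate a ha = q.append p := rfl
    rw [hrot, getVert_append]
    conv_rhs => rw [← hspec]
    rw [getVert_append]
    rcases Nat.lt_or_ge 1 q.length with h1 | h1
    · rw [if_pos h1, if_neg (by omega)]
      congr 1
      omega
    · have hq1' : q.length = 1 := by omega
      rw [if_neg (by omega), if_neg (by omega)]
      rw [hq1']
      have : p.length + 1 - p.length = 1 := by omega
      rw [this]
      have h2 : q.getVert 1 = v := by
        rw [← hq1']; exact q.getVert_length
      rw [h2, p.getVert_zero]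

end SimpleGraph.Walk

lemma exists_matching_of_injective {V : Type*} [Fintype V] {G : SimpleGraph V} {n : ℕ}
    (f g : Fin n → V) (hf : Function.Injective f) (hg : Function.Injective g)
    (hfg : ∀ i j, f i ≠ g j) (hadj : ∀ i, G.Adj (f i) (g i)) :
    (n : ℕ) ≤ matchingNumber G := by
  classical
  let M : G.Subgraph :=
    { verts := Set.range f ∪ Set.range g
      Adj := fun x y => ∃ i, (x = f i ∧ y = g i) ∨ (x = g i ∧ y = f i)
      adj_sub := by
        rintro x y ⟨i, ⟨rfl, rfl⟩ | ⟨rfl, rfl⟩⟩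
        · exact hadj i
        · exact (hadj i).symm
      edge_vert := by
        rintro x y ⟨i, ⟨rfl, -⟩ | ⟨rfl, -⟩⟩
        · exact Or.inl ⟨i, rfl⟩
        · exact Or.inr ⟨i, rfl⟩
      symm := ⟨by
        rintro x y ⟨i, ⟨rfl, rfl⟩ | ⟨rfl, rfl⟩⟩
        · exact ⟨i, Or.inr ⟨rfl, rfl⟩⟩
        · exact ⟨i, Or.inl ⟨rfl, rfl⟩⟩⟩ }
  have hMm : M.IsMatching := by
    rintro x (⟨i, rfl⟩ | ⟨i, rfl⟩)
    · refine ⟨g i, ⟨i, Or.inl ⟨rfl, rfl⟩⟩, ?_⟩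
      rintro y ⟨j, ⟨hij, rfl⟩ | ⟨hij, rfl⟩⟩
      · rw [hf hij]
      · exact absurd hij (hfg i j)
    · refine ⟨f i, ⟨i, Or.inr ⟨rfl, rfl⟩⟩, ?_⟩
      rintro y ⟨j, ⟨hij, rfl⟩ | ⟨hij, rfl⟩⟩
      · exact absurd hij.symm (hfg j i)
      · rw [hg hij]
  have hedge : M.edgeSet = Set.range (fun i => s(f i, g i)) := by
    ext e
    induction e with
    | h x y =>
      rw [SimpleGraph.Subgraph.mem_edgeSet, Set.mem_range]
      constructor
      · rintro ⟨i, ⟨rfl, rfl⟩ | ⟨rfl, rfl⟩⟩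
        · exact ⟨i, rfl⟩
        · exact ⟨i, Sym2.eq_swap⟩
      · rintro ⟨i, hi⟩
        rw [eq_comm, Sym2.eq_iff] at hi
        exact ⟨i, hi⟩
  have hinj : Function.Injective (fun i => (s(f i, g i) : Sym2 V)) := by
    intro i j hij
    simp only [Sym2.eq_iff] at hij
    rcases hij with ⟨h1, -⟩ | ⟨h1, -⟩
    · exact hf h1
    · exact absurd h1 (hfg i j)
  have hcard : M.edgeSet.ncard = n := by
    rw [hedge, ← Set.image_univ, Set.ncard_image_of_injective _ hinj, Set.ncard_univ,
      Nat.card_eq_fintype_card, Fintype.card_fin]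
  have hbdd : BddAbove {n | ∃ M : G.Subgraph, M.IsMatching ∧ M.edgeSet.ncard = n} := by
    refine ⟨G.edgeSet.ncard, ?_⟩
    rintro m ⟨N, hN, rfl⟩
    exact Set.ncard_le_ncard N.edgeSet_subset (Set.toFinite _)
  exact le_csSup hbdd ⟨M, hMm, hcard⟩

/-- `s = κ = m`, and the component of `G - V(C)` containing `x₀` is the single vertex `x₀`. -/
theorem stmt_2 {V : Type*} [Fintype V] [DecidableEq V] (G : SimpleGraph V)
    (hκ : 2 ≤ vertexConnectivity G)
    (hm : matchingNumber G ≤ vertexConnectivity G)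
    (hnotham : ¬ G.IsHamiltonian)
    {v : V} (c : G.Walk v v) (hc : c.IsCycle)
    (hlong : ∀ (w : V) (d : G.Walk w w), d.IsCycle → d.length ≤ c.length)
    (x₀ : V) (hx₀ : x₀ ∉ c.support)
    (s : ℕ) (hs : vertexConnectivity G ≤ s)
    (u : Fin s → V) (huinj : Function.Injective u)
    (humem : ∀ i, u i ∈ c.support)
    (P : ∀ i : Fin s, G.Walk x₀ (u i)) (hP : ∀ i, (P i).IsPath)
    (hdisj : ∀ i j, i ≠ j → ∀ w, w ∈ (P i).support → w ∈ (P j).support → w = x₀)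
    (honC : ∀ i, ∀ w ∈ (P i).support, w ∈ c.support → w = u i) :
    s = vertexConnectivity G ∧ s = matchingNumber G ∧
      ∀ (x : V) (hx : x ∉ c.support),
        (G.induce {w | w ∉ c.support}).Reachable ⟨x₀, hx₀⟩ ⟨x, hx⟩ → x = x₀ := by
  classical
  have hlen3 := hc.three_le_length
  have hcnn : ¬ c.Nil := by rw [Walk.not_nil_iff_lt_length]; omega
  set t : Fin s → V := fun i => (c.rotate (u i) (humem i)).getVert 1 with ht
  have hrotnn : ∀ i, ¬ (c.rotate (u i) (humem i)).Nil := fun i => by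
    rw [Walk.not_nil_iff_lt_length, Walk.length_rotate']; omega
  have hadj : ∀ i, G.Adj (u i) (t i) := fun i => Walk.adj_snd (hrotnn i)
  have hsucc : ∀ i, ∃ k < c.length, c.getVert k = u i ∧ t i = c.getVert (k + 1) := by
    intro i
    obtain ⟨k, hk, h1, h2⟩ := Walk.rotate_getVert_one (by omega) (humem i)
    exact ⟨k, hk, h1, h2⟩
  set Q : ∀ i : Fin s, G.Walk (t i) (u i) := fun i => (c.rotate (u i) (humem i)).tail with hQdef
  have hQpath : ∀ i, (Q i).IsPath := fun i => by
    apply Walk.IsPath.mk'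
    rw [Walk.support_tail_of_not_nil _ (hrotnn i)]
    exact (hc.rotate (humem i)).support_nodup
  have hQlen : ∀ i, (Q i).length + 1 = c.length := fun i => by
    show (c.rotate (u i) (humem i)).tail.length + 1 = c.length
    rw [Walk.length_tail_add_one (hrotnn i), Walk.length_rotate']
  have hsupmem : ∀ x, x ∈ c.support ↔ x ∈ c.support.tail := by
    intro x
    constructor
    · intro hx
      rw [c.support_eq_cons, List.mem_cons] at hx
      rcases hx with rfl | hx
      · rw [← Walk.support_tail_of_not_nil c hcnn]
        exact c.tail.end_mem_support
      · exact hx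
    · exact List.mem_of_mem_tail
  have hQsup : ∀ i x, x ∈ (Q i).support → x ∈ c.support := by
    intro i x hx
    have h1 : x ∈ (c.rotate (u i) (humem i)).support.tail := by
      rw [← Walk.support_tail_of_not_nil _ (hrotnn i)]; exact hx
    have h2 : x ∈ c.support.tail := ((Walk.support_rotate c (u i) (humem i)).mem_iff).mp h1
    exact (hsupmem x).mpr h2
  have htmem : ∀ i, t i ∈ c.support := fun i => hQsup i _ (Q i).start_mem_support
  have hPlen : ∀ i, 0 < (P i).length := by
    intro i
    rcases Nat.eq_zero_or_pos (P i).length with h0 | h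
    · exfalso
      have h1 := (P i).getVert_zero
      have h2 := (P i).getVert_of_length_le (i := 0) (by omega)
      rw [h1] at h2
      exact hx₀ (h2 ▸ humem i)
    · exact h
  have htu : ∀ i j, t i ≠ u j := by
    intro i j heq
    have hij : i ≠ j := by
      rintro rfl
      exact (hadj i).ne' heq
    have hne : u j ≠ u i := fun h => hij (huinj h).symm
    have hRpath : ((P i).reverse.append (P j)).IsPath := by
      apply Walk.IsPath.append_of_meet (hP i).reverse (hP j)
      intro x hx1 hx2
      rw [Walk.support_reverse, List.mem_reverse] at hx1
      exact hdisj i j hij x hx1 hx2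
    have hWcyc : (((Q i).copy heq rfl).append ((P i).reverse.append (P j))).IsCycle := by
      apply Walk.isCycle_append' ((Walk.isPath_copy _ _ _).mpr (hQpath i)) hRpath hne
      · rw [Walk.length_copy]
        have := hQlen i
        omega
      · intro x hx1 hx2
        rw [Walk.support_copy] at hx1
        have hxc : x ∈ c.support := hQsup i x hx1
        rw [Walk.mem_support_append_iff] at hx2
        rcases hx2 with hx2 | hx2
        · rw [Walk.support_reverse, List.mem_reverse] at hx2
          exact Or.inr (honC i x hx2 hxc)
        · exact Or.inl (honC j x hx2 hxc)
    have hle := hlong (u j) _ hWcyc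
    rw [Walk.length_append, Walk.length_append, Walk.length_copy, Walk.length_reverse] at hle
    have h1 := hQlen i
    have h2 := hPlen i
    have h3 := hPlen j
    omega
  have htinj : Function.Injective t := by
    intro i j hij
    obtain ⟨ki, hki, hui, hti⟩ := hsucc i
    obtain ⟨kj, hkj, huj, htj⟩ := hsucc j
    have hctail : c.tail.IsPath := by
      apply Walk.IsPath.mk'
      rw [Walk.support_tail_of_not_nil _ hcnn]
      exact hc.support_nodup
    have hlen' : c.tail.length + 1 = c.length := Walk.length_tail_add_one hcnn
    have hkk : ki = kj := by
      have := hctail.getVert_inj' (m := ki) (n := kj) (by omega) (by omega)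
        (by rw [Walk.getVert_tail c, Walk.getVert_tail c, ← hti, ← htj, hij])
      omega
    exact huinj (by rw [← hui, ← huj, hkk])
  have hsm : (s : ℕ) ≤ matchingNumber G :=
    exists_matching_of_injective u t huinj htinj (fun i j h => htu j i h.symm) hadj
  have h1 : s = vertexConnectivity G := le_antisymm (hsm.trans hm) hs
  have h2 : s = matchingNumber G := le_antisymm hsm (hm.trans hs)
  refine ⟨h1, h2, ?_⟩
  intro x hx hreach
  by_contra hxne
  obtain ⟨w⟩ := hreach
  have hwnn : ¬ w.Nil := by
    intro h
    rw [Walk.nil_iff_length_eq] at h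
    have hg1 := w.getVert_zero
    have hg2 := w.getVert_of_length_le (i := 0) (by omega)
    rw [hg1] at hg2
    exact hxne (congrArg Subtype.val hg2).symm
  set y := w.getVert 1 with hy
  have hadjy : (G.induce {w | w ∉ c.support}).Adj ⟨x₀, hx₀⟩ y := w.adj_snd hwnn
  have hGxy : G.Adj x₀ y.val := by simpa using hadjy
  have hyns : (y : V) ∉ c.support := y.2
  have hyne : (y : V) ≠ x₀ := hGxy.ne'
  have hf'inj : Function.Injective (Fin.snoc u x₀ : Fin (s+1) → V) := by
    intro i j h
    induction i using Fin.lastCases with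
    | last =>
      induction j using Fin.lastCases with
      | last => rfl
      | cast j =>
        rw [Fin.snoc_last, Fin.snoc_castSucc] at h
        exact absurd (humem j) (h ▸ hx₀)
    | cast i =>
      induction j using Fin.lastCases with
      | last =>
        rw [Fin.snoc_last, Fin.snoc_castSucc] at h
        exact absurd (humem i) (h.symm ▸ hx₀)
      | cast j =>
        rw [Fin.snoc_castSucc, Fin.snoc_castSucc] at h
        exact congrArg Fin.castSucc (huinj h)
  have hg'inj : Function.Injective (Fin.snoc t (y : V) : Fin (s+1) → V) := by
    intro i j h
    induction i using Fin.lastCases with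
    | last =>
      induction j using Fin.lastCases with
      | last => rfl
      | cast j =>
        rw [Fin.snoc_last, Fin.snoc_castSucc] at h
        exact absurd (htmem j) (h ▸ hyns)
    | cast i =>
      induction j using Fin.lastCases with
      | last =>
        rw [Fin.snoc_last, Fin.snoc_castSucc] at h
        exact absurd (htmem i) (h.symm ▸ hyns)
      | cast j =>
        rw [Fin.snoc_castSucc, Fin.snoc_castSucc] at h
        exact congrArg Fin.castSucc (htinj h)
  have hfg' : ∀ i j, (Fin.snoc u x₀ : Fin (s+1) → V) i ≠ (Fin.snoc t (y : V) : Fin (s+1) → V) j := by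
    intro i j
    induction i using Fin.lastCases with
    | last =>
      induction j using Fin.lastCases with
      | last =>
        rw [Fin.snoc_last, Fin.snoc_last]
        exact fun h => hyne h.symm
      | cast j =>
        rw [Fin.snoc_last, Fin.snoc_castSucc]
        exact fun h => hx₀ (h ▸ htmem j)
    | cast i =>
      induction j using Fin.lastCases with
      | last =>
        rw [Fin.snoc_last, Fin.snoc_castSucc]
        exact fun h => hyns (h ▸ humem i)
      | cast j =>
        rw [Fin.snoc_castSucc, Fin.snoc_castSucc]
        exact fun h => htu j i h.symm
  have hadj' : ∀ i : Fin (s+1), G.Adj ((Fin.snoc u x₀ : Fin (s+1) → V) i) ((Fin.snoc t (y : V) : Fin (s+1) → V) i) := by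
    intro i
    induction i using Fin.lastCases with
    | last => rw [Fin.snoc_last, Fin.snoc_last]; exact hGxy
    | cast i => rw [Fin.snoc_castSucc, Fin.snoc_castSucc]; exact hadj i
  have hbig := exists_matching_of_injective _ _ hf'inj hg'inj hfg' hadj'
  rw [← h2] at hbig
  omega
end

section
/- Let G be a non-Hamiltonian graph with κ(G) = m(G) = s ≥ 2, C a longest cycle with fixed orientation, and x₀ ∉ V(C) joined to C by s internally disjoint paths ending at u₁,...,uₛ appearing in this cyclic order on C. Then u_{i+1} = uᵢ⁺⁺ for each i (indices mod s); that is, C = u₁ u₁⁺ u₂ u₂⁺ ⋯ uₛ uₛ⁺ u₁ has exactly 2s vertices. -/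
open SimpleGraph Finset

namespace CycAux
variable {V : Type*} {G : SimpleGraph V}

lemma getVert_eq_support_getElem {a b : V} (p : G.Walk a b) {i : ℕ} (h : i ≤ p.length) :
    p.getVert i = p.support[i]'(by rw [SimpleGraph.Walk.length_support]; omega) := by
  induction p generalizing i with
  | nil => simp at h; subst h; simp
  | cons ha q ih =>
    cases i with
    | zero => simp
    | succ i =>
      rw [SimpleGraph.Walk.getVert_cons_succ]
      rw [ih (by simpa using h)]
      simp

lemma getVert_mem_support {a b : V} (p : G.Walk a b) (i : ℕ) :
    p.getVert i ∈ p.support := by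
  rcases le_or_gt i p.length with h | h
  · rw [getVert_eq_support_getElem p h]; exact List.getElem_mem _
  · rw [SimpleGraph.Walk.getVert_of_length_le p h.le]; exact SimpleGraph.Walk.end_mem_support p

lemma cycInj {v : V} {c : G.Walk v v} (hc : c.IsCycle) {i j : ℕ}
    (hi : i ≤ c.length) (hj : j ≤ c.length) (h : c.getVert i = c.getVert j) :
    i = j ∨ (i = 0 ∧ j = c.length) ∨ (i = c.length ∧ j = 0) := by
  have hnd := hc.2
  rw [getVert_eq_support_getElem c hi, getVert_eq_support_getElem c hj] at h
  have hlen : c.support.length = c.length + 1 := SimpleGraph.Walk.length_support c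
  have htl : c.support.tail.length = c.length := by rw [List.length_tail, hlen]; omega
  have hget : ∀ (t : ℕ) (ht : t < c.length), c.support.tail[t] = c.support[t+1]'(by omega) := by
    intro t ht
    rw [List.getElem_tail]
  rcases Nat.eq_zero_or_pos i with rfl | hi0 <;> rcases Nat.eq_zero_or_pos j with rfl | hj0
  · left; rfl
  · -- i = 0 : c.support[0] = v; also support[length] = v
    right; left
    refine ⟨rfl, ?_⟩
    by_contra hne
    have hjlt : j < c.length := lt_of_le_of_ne hj hne
    have h0 : c.support[0]'(by omega) = v := by
      rw [← getVert_eq_support_getElem c (Nat.zero_le _)]; exact c.getVert_zero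
    have hN : c.support[c.length]'(by omega) = v := by
      rw [← getVert_eq_support_getElem c le_rfl]; exact c.getVert_length
    have : c.support.tail[j-1]'(by omega) = c.support.tail[c.length - 1]'(by omega) := by
      rw [hget (j-1) (by omega), hget (c.length-1) (by omega)]
      have e1 : j - 1 + 1 = j := by omega
      have e2 : c.length - 1 + 1 = c.length := by omega
      simp_rw [e1, e2]
      rw [← h, h0, hN]
    have := (List.Nodup.getElem_inj_iff hnd).mp this
    omega
  · right; right
    refine ⟨?_, rfl⟩
    by_contra hne
    have hilt : i < c.length := lt_of_le_of_ne hi hne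
    have h0 : c.support[0]'(by omega) = v := by
      rw [← getVert_eq_support_getElem c (Nat.zero_le _)]; exact c.getVert_zero
    have hN : c.support[c.length]'(by omega) = v := by
      rw [← getVert_eq_support_getElem c le_rfl]; exact c.getVert_length
    have : c.support.tail[i-1]'(by omega) = c.support.tail[c.length - 1]'(by omega) := by
      rw [hget (i-1) (by omega), hget (c.length-1) (by omega)]
      have e1 : i - 1 + 1 = i := by omega
      have e2 : c.length - 1 + 1 = c.length := by omega
      simp_rw [e1, e2]
      rw [h, h0, hN]
    have := (List.Nodup.getElem_inj_iff hnd).mp this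
    omega
  · left
    have : c.support.tail[i-1]'(by omega) = c.support.tail[j-1]'(by omega) := by
      rw [hget (i-1) (by omega), hget (j-1) (by omega)]
      have e1 : i - 1 + 1 = i := by omega
      have e2 : j - 1 + 1 = j := by omega
      simp_rw [e1, e2]; exact h
    have := (List.Nodup.getElem_inj_iff hnd).mp this
    omega

section DE
variable [DecidableEq V]

lemma takeUntil_start_length {v b : V} (p : G.Walk v b) (h : v ∈ p.support) :
    (p.takeUntil v h).length = 0 := by
  cases p with
  | nil => rfl
  | cons ha q => simp [SimpleGraph.Walk.takeUntil]

lemma getVert_takeUntil_append {v b x : V} (p : G.Walk v b) (h : x ∈ p.support) (t : ℕ) :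
    p.getVert ((p.takeUntil x h).length + t) = (p.dropUntil x h).getVert t := by
  have key : ((p.takeUntil x h).append (p.dropUntil x h)).getVert
      ((p.takeUntil x h).length + t) = (p.dropUntil x h).getVert t := by
    rw [SimpleGraph.Walk.getVert_append]
    simp
  rw [SimpleGraph.Walk.take_spec p h] at key
  exact key

lemma length_takeUntil_eq {v : V} {c : G.Walk v v} (hc : c.IsCycle) {x : V} {m : ℕ}
    (hm : m < c.length) (hx : c.getVert m = x) (hmem : x ∈ c.support) :
    (c.takeUntil x hmem).length = m := by
  have hle := SimpleGraph.Walk.length_takeUntil_le c hmem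
  have hgv : c.getVert (c.takeUntil x hmem).length = x := by
    have := getVert_takeUntil_append c hmem 0
    simpa using this
  have := cycInj hc hle hm.le (hgv.trans hx.symm)
  rcases this with h | ⟨h1, h2⟩ | ⟨h1, h2⟩
  · exact h
  · omega
  · -- takeUntil length = c.length and m = 0, so x = v
    exfalso
    subst h2
    rw [c.getVert_zero] at hx
    subst hx
    rw [takeUntil_start_length] at h1
    have := hc.three_le_length
    omega

lemma length_rotate {v x : V} (c : G.Walk v v) (h : x ∈ c.support) :
    (c.rotate x h).length = c.length := by
  have := congr_arg SimpleGraph.Walk.length (SimpleGraph.Walk.take_spec c h)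
  rw [SimpleGraph.Walk.length_append] at this
  rw [SimpleGraph.Walk.rotate, SimpleGraph.Walk.length_append]
  omega

/-- second vertex of the rotation of a cycle at `getVert m`. -/
lemma rotate_getVert_one {v : V} {c : G.Walk v v} (hc : c.IsCycle) {x : V} {m : ℕ}
    (hm : m < c.length) (hx : c.getVert m = x) (hmem : x ∈ c.support) :
    (c.rotate x hmem).getVert 1 = c.getVert (m + 1) := by
  have htl : (c.takeUntil x hmem).length = m := length_takeUntil_eq hc hm hx hmem
  have hdl : (c.dropUntil x hmem).length = c.length - m := by
    have := congr_arg SimpleGraph.Walk.length (SimpleGraph.Walk.take_spec c hmem)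
    rw [SimpleGraph.Walk.length_append, htl] at this
    omega
  rw [SimpleGraph.Walk.rotate, SimpleGraph.Walk.getVert_append, hdl]
  have h1 : c.getVert (m + 1) = (c.dropUntil x hmem).getVert 1 := by
    have := getVert_takeUntil_append c hmem 1
    rw [htl] at this; exact this
  by_cases hcase : 1 < c.length - m
  · simp only [if_pos hcase]
    exact h1.symm
  · -- m = c.length - 1 ; dropUntil has length 1, getVert 1 of rotate is takeUntil's getVert 0 = v
    have hm1 : m = c.length - 1 := by omega
    simp only [if_neg hcase]
    have h2 : (1 : ℕ) - (c.length - m) = 0 := by omega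
    rw [h2, SimpleGraph.Walk.getVert_zero]
    rw [h1]
    have : (c.dropUntil x hmem).getVert 1 = (c.dropUntil x hmem).getVert (c.dropUntil x hmem).length := by
      congr 1; omega
    rw [this, SimpleGraph.Walk.getVert_length]


lemma claimA_aux {v x₀ ui uj : V} {c : G.Walk v v} (hc : c.IsCycle)
    (hlong : ∀ (w : V) (d : G.Walk w w), d.IsCycle → d.length ≤ c.length)
    (hx₀ : x₀ ∉ c.support)
    (Pi : G.Walk x₀ ui) (Pj : G.Walk x₀ uj) (hPi : Pi.IsPath) (hPj : Pj.IsPath)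
    (hdisjij : ∀ w, w ∈ Pi.support → w ∈ Pj.support → w = x₀)
    (honCi : ∀ w ∈ Pi.support, w ∈ c.support → w = ui)
    (honCj : ∀ w ∈ Pj.support, w ∈ c.support → w = uj)
    (hui : ui ∈ c.support)
    {m : ℕ} (hm : m < c.length) (h1 : c.getVert m = ui) (h2 : c.getVert (m+1) = uj) :
    False := by
  classical
  set n := c.length with hn
  have hn3 : 3 ≤ n := hc.three_le_length
  -- rotate the cycle to start at ui
  set c' : G.Walk ui ui := c.rotate ui hui with hc'def
  have hc' : c'.IsCycle := hc.rotate hui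
  have hc'nil : ¬ c'.Nil := hc'.not_nil
  have hc'len : c'.length = n := length_rotate c hui
  have hT2 : c'.getVert 1 = uj := by
    rw [rotate_getVert_one hc hm h1 hui, h2]
  set T' : G.Walk uj ui := (c'.tail).copy hT2 rfl with hT'def
  have hTsup : T'.support = c'.support.tail := by
    rw [hT'def, SimpleGraph.Walk.support_copy, SimpleGraph.Walk.support_tail_of_not_nil c' hc'nil]
  have hTnodup : T'.support.Nodup := by rw [hTsup]; exact hc'.2
  have hTpath : T'.IsPath := (SimpleGraph.Walk.isPath_def _).mpr hTnodup
  have hTlen : T'.length = n - 1 := by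
    have := SimpleGraph.Walk.length_tail_add_one hc'nil
    rw [hT'def, SimpleGraph.Walk.length_copy]
    omega
  have hTmemC : ∀ x ∈ T'.support, x ∈ c.support := by
    intro x hx
    rw [hTsup] at hx
    have hrot := SimpleGraph.Walk.support_rotate c ui hui
    rw [← hc'def] at hrot
    exact List.mem_of_mem_tail (hrot.mem_iff.mp hx)
  -- lengths of the two paths
  have hx0ne : ∀ y ∈ c.support, x₀ ≠ y := fun y hy h => hx₀ (h ▸ hy)
  have hPilen : 1 ≤ Pi.length := by
    by_contra h
    exact hx0ne ui hui (SimpleGraph.Walk.eq_of_length_eq_zero (p := Pi) (by omega))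
  have huj : uj ∈ c.support := by
    have := SimpleGraph.Walk.end_mem_support T'
    exact hTmemC uj (T'.support_eq_cons ▸ List.mem_cons_self)
  have hPjlen : 1 ≤ Pj.length := by
    by_contra h
    exact hx0ne uj huj (SimpleGraph.Walk.eq_of_length_eq_zero (p := Pj) (by omega))
  -- the long closed walk
  set Q : G.Walk uj uj := T'.append (Pi.reverse.append Pj) with hQdef
  have hQlen : Q.length = (n - 1) + Pi.length + Pj.length := by
    rw [hQdef, SimpleGraph.Walk.length_append, SimpleGraph.Walk.length_append,
      SimpleGraph.Walk.length_reverse, hTlen]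
    omega
  -- membership helpers
  have hA : ∀ x ∈ T'.support.tail, x ∈ c.support ∧ x ≠ uj := by
    intro x hx
    refine ⟨hTmemC x (List.mem_of_mem_tail hx), ?_⟩
    intro h
    subst h
    have := T'.support_eq_cons
    rw [this] at hTnodup
    exact (List.nodup_cons.mp hTnodup).1 hx
  have hB : ∀ x ∈ Pi.reverse.support.tail, x ∈ Pi.support ∧ x ≠ ui := by
    have hnd : Pi.reverse.support.Nodup := by
      rw [SimpleGraph.Walk.support_reverse]; exact List.nodup_reverse.mpr hPi.2
    intro x hx
    constructor
    · have h' := List.mem_of_mem_tail hx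
      rw [SimpleGraph.Walk.support_reverse, List.mem_reverse] at h'
      exact h'
    · intro h
      subst h
      rw [Pi.reverse.support_eq_cons] at hnd
      exact (List.nodup_cons.mp hnd).1 hx
  have hC : ∀ x ∈ Pj.support.tail, x ∈ Pj.support ∧ x ≠ x₀ := by
    intro x hx
    refine ⟨List.mem_of_mem_tail hx, ?_⟩
    intro h
    subst h
    have hnd := hPj.2
    rw [Pj.support_eq_cons] at hnd
    exact (List.nodup_cons.mp hnd).1 hx
  -- support tail of Q
  have hQtail : Q.support.tail
      = T'.support.tail ++ (Pi.reverse.support.tail ++ Pj.support.tail) := by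
    rw [hQdef, SimpleGraph.Walk.tail_support_append, SimpleGraph.Walk.tail_support_append]
  have hQnodup : Q.support.tail.Nodup := by
    rw [hQtail]
    rw [List.nodup_append, List.nodup_append]
    refine ⟨List.Nodup.sublist (List.tail_sublist _) hTnodup,
      ⟨?_, ?_, ?_⟩, ?_⟩
    · exact List.Nodup.sublist (List.tail_sublist _)
        (by rw [SimpleGraph.Walk.support_reverse]; exact List.nodup_reverse.mpr hPi.2)
    · exact List.Nodup.sublist (List.tail_sublist _) hPj.2
    · -- B vs C
      intro x hxB _ hxC rfl
      obtain ⟨hx1, hx2⟩ := hB x hxB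
      obtain ⟨hx3, hx4⟩ := hC x hxC
      exact hx4 (hdisjij x hx1 hx3)
    · -- A vs (B ++ C)
      intro x hxA _ hxBC rfl
      obtain ⟨hx1, hx2⟩ := hA x hxA
      rcases List.mem_append.mp hxBC with hxB | hxC
      · obtain ⟨hx3, hx4⟩ := hB x hxB
        exact hx4 (honCi x hx3 hx1)
      · obtain ⟨hx3, hx4⟩ := hC x hxC
        exact hx2 (honCj x hx3 hx1)
  -- edges nodup
  have edgemem : ∀ {a b : V} (W : G.Walk a b) (e : Sym2 V), e ∈ W.edges →
      ∃ x y, e = s(x, y) ∧ x ∈ W.support ∧ y ∈ W.support ∧ x ≠ y := by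
    intro a b W e he
    induction e with
    | _ x y =>
      exact ⟨x, y, rfl, W.fst_mem_support_of_mem_edges he, W.snd_mem_support_of_mem_edges he,
        (W.adj_of_mem_edges he).ne⟩
  have hQedges : Q.edges = T'.edges ++ (Pi.reverse.edges ++ Pj.edges) := by
    rw [hQdef, SimpleGraph.Walk.edges_append, SimpleGraph.Walk.edges_append]
  have hQtrail : Q.IsTrail := by
    rw [SimpleGraph.Walk.isTrail_def, hQedges, List.nodup_append, List.nodup_append]
    refine ⟨hTpath.isTrail.edges_nodup, ⟨hPi.reverse.isTrail.edges_nodup,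
      hPj.isTrail.edges_nodup, ?_⟩, ?_⟩
    · intro e heB _ heC rfl
      obtain ⟨x, y, rfl, hx, hy, hne⟩ := edgemem _ e heB
      rw [SimpleGraph.Walk.support_reverse, List.mem_reverse] at hx hy
      have he2 : s(x,y) ∈ Pj.edges := heC
      have hx' := Pj.fst_mem_support_of_mem_edges he2
      have hy' := Pj.snd_mem_support_of_mem_edges he2
      exact hne ((hdisjij x hx hx').trans (hdisjij y hy hy').symm)
    · intro e heA _ heBC rfl
      obtain ⟨x, y, rfl, hx, hy, hne⟩ := edgemem _ e heA
      have hxc := hTmemC x hx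
      have hyc := hTmemC y hy
      rcases List.mem_append.mp heBC with heB | heC
      · have he2 : s(x,y) ∈ Pi.edges := by
          have := SimpleGraph.Walk.edges_reverse Pi
          rw [this, List.mem_reverse] at heB
          exact heB
        have hx' := Pi.fst_mem_support_of_mem_edges he2
        have hy' := Pi.snd_mem_support_of_mem_edges he2
        exact hne ((honCi x hx' hxc).trans (honCi y hy' hyc).symm)
      · have hx' := Pj.fst_mem_support_of_mem_edges heC
        have hy' := Pj.snd_mem_support_of_mem_edges heC
        exact hne ((honCj x hx' hxc).trans (honCj y hy' hyc).symm)
  have hQcyc : Q.IsCycle := by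
    rw [SimpleGraph.Walk.isCycle_def]
    refine ⟨hQtrail, ?_, hQnodup⟩
    intro h
    have : Q.length = 0 := by rw [h]; rfl
    omega
  have := hlong uj Q hQcyc
  omega

end DE

lemma matching_le {V : Type*} [Fintype V] (G : SimpleGraph V) (N : ℕ) (e : Fin N → V × V)
    (hadj : ∀ t, G.Adj (e t).1 (e t).2)
    (hdist : ∀ t t', t ≠ t' → (e t).1 ≠ (e t').1 ∧ (e t).1 ≠ (e t').2 ∧
      (e t).2 ≠ (e t').1 ∧ (e t).2 ≠ (e t').2) :
    N ≤ sSup {n | ∃ M : G.Subgraph, M.IsMatching ∧ M.edgeSet.ncard = n} := by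
  classical
  set M : G.Subgraph := ⨆ t, G.subgraphOfAdj (hadj t) with hMdef
  have hmatch : M.IsMatching := by
    apply Subgraph.IsMatching.iSup (fun t => Subgraph.IsMatching.subgraphOfAdj _)
    intro t t' htt
    rw [support_subgraphOfAdj, support_subgraphOfAdj]
    obtain ⟨d1, d2, d3, d4⟩ := hdist t t' htt
    rw [Set.disjoint_iff]
    rintro x ⟨hx1, hx2⟩
    simp only [Set.mem_insert_iff, Set.mem_singleton_iff] at hx1 hx2
    rcases hx1 with rfl | rfl <;> rcases hx2 with h | h <;> tauto
  have hcard : M.edgeSet.ncard = N := by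
    have hE : M.edgeSet = Set.range (fun t => s((e t).1, (e t).2)) := by
      rw [hMdef, Subgraph.edgeSet_iSup]
      ext x
      simp only [edgeSet_subgraphOfAdj, Set.mem_iUnion, Set.mem_singleton_iff, Set.mem_range]
      tauto
    rw [hE, ← Set.image_univ, Set.ncard_image_of_injective _ (fun t t' h => ?_),
      Set.ncard_univ, Nat.card_eq_fintype_card, Fintype.card_fin]
    by_contra hne
    obtain ⟨d1, d2, d3, d4⟩ := hdist t t' hne
    rw [Sym2.eq_iff] at h
    tauto
  apply le_csSup
  · refine ⟨(Set.univ : Set (Sym2 V)).ncard, ?_⟩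
    rintro n ⟨M', _, rfl⟩
    exact Set.ncard_le_ncard (Set.subset_univ _) Set.finite_univ
  · exact ⟨M, hmatch, hcard⟩

end CycAux

open CycAux in
/-- `u_{i+1} = uᵢ⁺⁺` for each `i` (indices mod `s`): the cycle is
`u₁ u₁⁺ u₂ u₂⁺ ⋯ uₛ uₛ⁺ u₁` and has exactly `2s` vertices. -/
theorem stmt_3 {V : Type*} [Fintype V] [DecidableEq V] (G : SimpleGraph V)
    (hnotham : ¬ G.IsHamiltonian)
    (s : ℕ) (hs : 2 ≤ s)
    (hκ : vertexConnectivity G = s) (hm : matchingNumber G = s)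
    {v : V} (c : G.Walk v v) (hc : c.IsCycle)
    (hlong : ∀ (w : V) (d : G.Walk w w), d.IsCycle → d.length ≤ c.length)
    (x₀ : V) (hx₀ : x₀ ∉ c.support)
    (u : Fin s → V) (huinj : Function.Injective u)
    (humem : ∀ i, u i ∈ c.support)
    (P : ∀ i : Fin s, G.Walk x₀ (u i)) (hP : ∀ i, (P i).IsPath)
    (hdisj : ∀ i j, i ≠ j → ∀ w, w ∈ (P i).support → w ∈ (P j).support → w = x₀)
    (honC : ∀ i, ∀ w ∈ (P i).support, w ∈ c.support → w = u i)
    (horder : ∃ k : Fin s → ℕ, StrictMono k ∧ ∀ i, k i < c.length ∧ c.getVert (k i) = u i)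
    (usucc : Fin s → V) (hsucc : ∀ i, IsCycleSucc c (u i) (usucc i)) :
    (∀ i : Fin s,
      IsCycleSucc c (usucc i) (u ⟨(↑i + 1) % s, Nat.mod_lt _ (by omega)⟩)) ∧
    c.length = 2 * s := by
  classical
  classical
  obtain ⟨k, hkmono, hk⟩ := horder
  set n := c.length with hn
  have hn3 : 3 ≤ n := hc.three_le_length
  have hklt : ∀ i, k i < n := fun i => (hk i).1
  have hkv : ∀ i, c.getVert (k i) = u i := fun i => (hk i).2
  set ws : Fin s → V := fun i => c.getVert (k i + 1) with hwsdef
  -- basic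
  have hinj := fun {i j : ℕ} (hi : i ≤ n) (hj : j ≤ n) h => cycInj hc hi hj h
  have hwssup : ∀ i, ws i ∈ c.support := fun i => getVert_mem_support c (k i + 1)
  have hx0ne : ∀ y, y ∈ c.support → x₀ ≠ y := fun y hy h => hx₀ (h ▸ hy)
  -- u i = getVert (k i); indices of `u` values are determined
  have hupos : ∀ (i : Fin s) (m : ℕ), m < n → c.getVert m = u i → m = k i := by
    intro i m hm hgv
    have := hinj hm.le (hklt i).le (hgv.trans (hkv i).symm)
    rcases this with h | ⟨h1, h2⟩ | ⟨h1, h2⟩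
    · exact h
    · exact absurd h2 (by have := hklt i; omega)
    · -- m = n contradicts m < n
      omega
  -- usucc = ws
  have husucc : ∀ i, usucc i = ws i := by
    intro i
    obtain ⟨m, hm, ha, hb⟩ := hsucc i
    have := hupos i m hm ha
    subst this
    exact hb.symm
  -- Claim A : ws i is never a u j
  have hA : ∀ i j, ws i ≠ u j := by
    intro i j h
    have hij : i ≠ j := by
      rintro rfl
      have := hinj (show k i + 1 ≤ n by have := hklt i; omega) (hklt i).le
        (h.trans (hkv i).symm)
      have := hklt i; omega
    exact claimA_aux hc hlong hx₀ (P i) (P j) (hP i) (hP j)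
      (fun w hw1 hw2 => hdisj i j hij w hw1 hw2) (honC i) (honC j) (humem i)
      (hklt i) (hkv i) h
  -- ws injective
  have hwsinj : ∀ i j : Fin s, ws i = ws j → i = j := by
    intro i j h
    have h1 := hklt i; have h2 := hklt j
    have := hinj (show k i + 1 ≤ n by omega) (show k j + 1 ≤ n by omega) h
    have hkij : k i = k j := by omega
    exact hkmono.injective hkij
  -- the matching-based bound
  have hBG : ∀ (i₀ : Fin s) (q : ℕ), q < n → c.getVert q = ws i₀ →
      (∀ t, c.getVert (q+1) ≠ u t) → (∀ t, c.getVert (q+1) ≠ ws t) → False := by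
    intro i₀ q hq hq1 hzu hzw
    set z := c.getVert (q+1) with hzdef
    set y := (P i₀).getVert 1 with hydef
    have hPlen : 1 ≤ (P i₀).length := by
      by_contra h
      exact hx0ne (u i₀) (humem i₀)
        (SimpleGraph.Walk.eq_of_length_eq_zero (p := P i₀) (by omega))
    have hyadj : G.Adj x₀ y := by
      have := (P i₀).adj_getVert_succ (i := 0) (by omega)
      rwa [(P i₀).getVert_zero] at this
    have hzadj : G.Adj (ws i₀) z := by
      have := c.adj_getVert_succ (i := q) hq
      rwa [hq1] at this
    have huadj : ∀ t, G.Adj (u t) (ws t) := by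
      intro t
      have := c.adj_getVert_succ (i := k t) (hklt t)
      rwa [hkv t] at this
    have hzsup : z ∈ c.support := getVert_mem_support c (q+1)
    have hysup : y ∈ (P i₀).support := getVert_mem_support (P i₀) 1
    have hycase : y = u i₀ ∨ y ∉ c.support := by
      by_cases h : y ∈ c.support
      · exact Or.inl (honC i₀ y hysup h)
      · exact Or.inr h
    have fu : ∀ a b : Fin s, a ≠ b → u a ≠ u b := fun a b hne h => hne (huinj h)
    have fw : ∀ a b : Fin s, a ≠ b → ws a ≠ ws b := fun a b hne h => hne (hwsinj a b h)
    have fuw : ∀ a b : Fin s, u a ≠ ws b := fun a b h => hA b a h.symm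
    have fxu : ∀ a, x₀ ≠ u a := fun a => hx0ne _ (humem a)
    have fxw : ∀ a, x₀ ≠ ws a := fun a => hx0ne _ (hwssup a)
    have fxz : x₀ ≠ z := hx0ne _ hzsup
    have fyu : ∀ a, a ≠ i₀ → y ≠ u a := by
      intro a ha h
      rcases hycase with h2 | h2
      · exact fu i₀ a (fun hh => ha hh.symm) (h2.symm.trans h)
      · exact h2 (h ▸ humem a)
    have fyw : ∀ a, y ≠ ws a := by
      intro a h
      rcases hycase with h2 | h2
      · exact fuw i₀ a (h2.symm.trans h)
      · exact h2 (h ▸ hwssup a)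
    have fyz : y ≠ z := by
      rcases hycase with h2 | h2
      · rw [h2]; exact fun h => hzu i₀ h.symm
      · exact fun h => h2 (h ▸ hzsup)
    have fyx : y ≠ x₀ := hyadj.ne'
    have fwz : ∀ a, ws a ≠ z := fun a h => hzw a h.symm
    have fuz : ∀ a, u a ≠ z := fun a h => hzu a h.symm
    set e : Fin (s+1) → V × V := fun t =>
      if h : (t : ℕ) < s then
        (if (⟨(t : ℕ), h⟩ : Fin s) = i₀ then (ws i₀, z) else (u ⟨(t : ℕ), h⟩, ws ⟨(t : ℕ), h⟩))
      else (x₀, y) with hedef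
    have hadjE : ∀ t, G.Adj (e t).1 (e t).2 := by
      intro t
      rw [hedef]
      by_cases h : (t : ℕ) < s
      · simp only [dif_pos h]
        by_cases h2 : (⟨(t : ℕ), h⟩ : Fin s) = i₀
        · simp only [if_pos h2]; exact hzadj
        · simp only [if_neg h2]; exact huadj _
      · simp only [dif_neg h]; exact hyadj
    have hdistE : ∀ t t', t ≠ t' → (e t).1 ≠ (e t').1 ∧ (e t).1 ≠ (e t').2 ∧
        (e t).2 ≠ (e t').1 ∧ (e t).2 ≠ (e t').2 := by
      intro t t' hne
      rw [hedef]
      by_cases h : (t : ℕ) < s <;> by_cases h' : (t' : ℕ) < s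
      · simp only [dif_pos h, dif_pos h']
        have hab : (⟨(t : ℕ), h⟩ : Fin s) ≠ ⟨(t' : ℕ), h'⟩ := by
          intro hh
          apply hne
          apply Fin.ext
          simpa using congrArg Fin.val hh
        by_cases h2 : (⟨(t : ℕ), h⟩ : Fin s) = i₀ <;>
          by_cases h2' : (⟨(t' : ℕ), h'⟩ : Fin s) = i₀
        · exact absurd (h2.trans h2'.symm) hab
        · simp only [if_pos h2, if_neg h2']
          exact ⟨(fuw _ _).symm, fw i₀ _ (h2 ▸ hab), hzu _, hzw _⟩
        · simp only [if_neg h2, if_pos h2']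
          exact ⟨fuw _ _, fuz _, fw _ i₀ (h2' ▸ hab), fwz _⟩
        · simp only [if_neg h2, if_neg h2']
          exact ⟨fu _ _ hab, fuw _ _, (fuw _ _).symm, fw _ _ hab⟩
      · simp only [dif_pos h, dif_neg h']
        by_cases h2 : (⟨(t : ℕ), h⟩ : Fin s) = i₀
        · simp only [if_pos h2]
          exact ⟨(fxw _).symm, (fyw _).symm, fxz.symm, fyz.symm⟩
        · simp only [if_neg h2]
          exact ⟨(fxu _).symm, (fyu _ h2).symm, (fxw _).symm, (fyw _).symm⟩
      · simp only [dif_neg h, dif_pos h']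
        by_cases h2 : (⟨(t' : ℕ), h'⟩ : Fin s) = i₀
        · simp only [if_pos h2]
          exact ⟨fxw _, fxz, fyw _, fyz⟩
        · simp only [if_neg h2]
          exact ⟨fxu _, fxw _, fyu _ h2, fyw _⟩
      · exfalso
        apply hne
        apply Fin.ext
        have ht := t.isLt
        have ht' := t'.isLt
        omega
    have hfin := matching_le G (s+1) e hadjE hdistE
    have h2 : s + 1 ≤ matchingNumber G := by unfold matchingNumber; exact hfin
    omega
  -- gaps between consecutive u's are exactly 2
  have hgap2 : ∀ (i : ℕ) (h : i + 1 < s), k ⟨i+1, h⟩ = k ⟨i, by omega⟩ + 2 := by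
    intro i h
    set a : Fin s := ⟨i, by omega⟩ with hadef
    set b : Fin s := ⟨i+1, h⟩ with hbdef
    have hab : a < b := by rw [Fin.lt_def]; show i < i + 1; omega
    have hlt : k a < k b := hkmono hab
    have hlow : k a + 2 ≤ k b := by
      rcases Nat.lt_or_ge (k b) (k a + 2) with hcon | hok
      · exfalso
        have hkb : k b = k a + 1 := by omega
        apply hA a b
        rw [hwsdef]
        show c.getVert (k a + 1) = u b
        rw [← hkb]
        exact hkv b
      · exact hok
    have hup : k b ≤ k a + 2 := by
      by_contra hcon
      push_neg at hcon
      have hkbn := hklt b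
      apply hBG a (k a + 1) (by omega) rfl
      · intro t ht
        have hkt := hupos t (k a + 2) (by omega) ht
        have h1 : a < t := hkmono.lt_iff_lt.mp (by omega)
        have h2 : t < b := hkmono.lt_iff_lt.mp (by omega)
        rw [Fin.lt_def] at h1 h2
        have e1 : (a:ℕ) = i := rfl
        have e2 : (b:ℕ) = i+1 := rfl
        omega
      · intro t ht
        have hktn := hklt t
        have := hinj (show k a + 1 + 1 ≤ n by omega) (show k t + 1 ≤ n by omega) ht
        have hkt : k t = k a + 1 := by omega
        apply hA a t
        rw [hwsdef]
        show c.getVert (k a + 1) = u t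
        rw [← hkt]
        exact hkv t
    omega
  -- wrap-around gap is exactly 2
  have hL : s - 1 < s := by omega
  have h0 : 0 < s := by omega
  have hwrap : n - k ⟨s-1, hL⟩ + k ⟨0, h0⟩ = 2 := by
    set L : Fin s := ⟨s-1, hL⟩ with hLdef
    set Z : Fin s := ⟨0, h0⟩ with hZdef
    have hbnd : ∀ t : Fin s, k Z ≤ k t ∧ k t ≤ k L := by
      intro t
      constructor
      · exact hkmono.monotone (by rw [Fin.le_def]; show 0 ≤ (t:ℕ); omega)
      · exact hkmono.monotone (by rw [Fin.le_def]; show (t:ℕ) ≤ s - 1; have := t.isLt; omega)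
    have hkLn := hklt L
    have hlow : 2 ≤ n - k L + k Z := by
      by_contra hcon
      push_neg at hcon
      have h1 : n - k L = 1 ∧ k Z = 0 := by omega
      apply hA L Z
      rw [hwsdef]
      show c.getVert (k L + 1) = u Z
      rw [show k L + 1 = n from by omega, hn, c.getVert_length,
        show v = c.getVert (k Z) from by rw [h1.2]; exact c.getVert_zero.symm]
      exact hkv Z
    have hup : n - k L + k Z ≤ 2 := by
      by_contra hcon
      push_neg at hcon
      by_cases hc1 : k L + 2 ≤ n
      · apply hBG L (k L + 1) (by omega) rfl
        · intro t ht
          have hbt := hbnd t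
          rcases Nat.lt_or_ge (k L + 2) n with h2 | h2
          · have := hupos t (k L + 2) h2 ht
            omega
          · have hkL2 : k L + 2 = n := by omega
            rw [hkL2, hn, c.getVert_length] at ht
            have := hupos t 0 (by omega) (by rw [c.getVert_zero]; exact ht)
            omega
        · intro t ht
          have hbt := hbnd t
          have hktn := hklt t
          have := hinj (show k L + 1 + 1 ≤ n by omega) (show k t + 1 ≤ n by omega) ht
          omega
      · -- k L = n - 1
        have hkL : k L = n - 1 := by omega
        have hkZ2 : 2 ≤ k Z := by omega
        apply hBG L 0 (by omega) ?_
        · intro t ht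
          have hbt := hbnd t
          have := hupos t 1 (by omega) ht
          omega
        · intro t ht
          have hbt := hbnd t
          have hktn := hklt t
          have := hinj (show (0:ℕ) + 1 ≤ n by omega) (show k t + 1 ≤ n by omega) ht
          omega
        · rw [hwsdef]
          show c.getVert 0 = c.getVert (k L + 1)
          rw [show k L + 1 = n from by omega, hn, c.getVert_length, c.getVert_zero]
    omega
  -- positions
  have hkfun : ∀ (t : ℕ) (ht : t < s), k ⟨t, ht⟩ = k ⟨0, h0⟩ + 2*t := by
    intro t
    induction t with
    | zero => intro ht; simp
    | succ r ih =>
      intro ht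
      have hr : r < s := by omega
      rw [hgap2 r ht, ih hr]
      omega
  have hlen : n = 2 * s := by
    have h1 := hkfun (s-1) hL
    have h2 := hklt ⟨s-1, hL⟩
    have : k ⟨s-1,hL⟩ = k ⟨0,h0⟩ + 2*(s-1) := h1
    omega
  refine ⟨?_, hlen⟩
  intro i
  rw [husucc i]
  by_cases hcase : (i : ℕ) + 1 < s
  · -- non-wrap
    have hmod : ((i : ℕ) + 1) % s = (i : ℕ) + 1 := Nat.mod_eq_of_lt hcase
    have hieq : (⟨(↑i + 1) % s, Nat.mod_lt _ (by omega)⟩ : Fin s) = ⟨(i:ℕ)+1, hcase⟩ := by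
      apply Fin.ext; simp [hmod]
    rw [hieq]
    refine ⟨k i + 1, ?_, rfl, ?_⟩
    · have := hgap2 i hcase
      have hi' : (⟨(i:ℕ), by omega⟩ : Fin s) = i := by apply Fin.ext; rfl
      rw [hi'] at this
      have := hklt ⟨(i:ℕ)+1, hcase⟩
      omega
    · have hg := hgap2 i hcase
      have hi' : (⟨(i:ℕ), by omega⟩ : Fin s) = i := by apply Fin.ext; rfl
      rw [hi'] at hg
      rw [show k i + 1 + 1 = k ⟨(i:ℕ)+1, hcase⟩ by omega]
      exact hkv _
  · -- wrap : i = s-1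
    have hieq : i = ⟨s-1, hL⟩ := by
      have h2 := i.isLt
      apply Fin.ext
      show (i:ℕ) = s - 1
      omega
    have hmod : ((i : ℕ) + 1) % s = 0 := by
      have : (i:ℕ) + 1 = s := by have := i.2; omega
      simp [this]
    have hinext : (⟨(↑i + 1) % s, Nat.mod_lt _ (by omega)⟩ : Fin s) = ⟨0, h0⟩ := by
      apply Fin.ext; simp [hmod]
    rw [hinext, hieq]
    have hcases : (k ⟨s-1,hL⟩ = n - 2 ∧ k ⟨0,h0⟩ = 0) ∨ (k ⟨s-1,hL⟩ = n - 1 ∧ k ⟨0,h0⟩ = 1) := by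
      have := hklt ⟨s-1,hL⟩
      omega
    rcases hcases with ⟨ha, hb⟩ | ⟨ha, hb⟩
    · refine ⟨n - 1, by omega, ?_, ?_⟩
      · show c.getVert (n-1) = ws ⟨s-1,hL⟩
        rw [hwsdef]
        congr 1
        omega
      · rw [show n - 1 + 1 = n by omega]
        rw [hn, c.getVert_length]  -- careful: n := c.length
        rw [show v = c.getVert (k ⟨0,h0⟩) by rw [hb]; exact c.getVert_zero.symm]
        exact hkv _
    · refine ⟨0, by omega, ?_, ?_⟩
      · show c.getVert 0 = ws ⟨s-1,hL⟩
        rw [hwsdef]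
        simp only []
        rw [show k ⟨s-1,hL⟩ + 1 = n by omega, c.getVert_zero, hn, c.getVert_length]
      · rw [show (0:ℕ) + 1 = k ⟨0,h0⟩ by omega]
        exact hkv _
end

section
/- Let G be a non-Hamiltonian graph with κ(G) = m(G) = s ≥ 2, and let C be a longest cycle with a vertex x₀ outside C as above. Then the vertex set V(G) \ (V(C) ∪ {x₀}), if nonempty, is an independent set in G. -/
open SimpleGraph Finset

section Aux
variable {V : Type*} {G : SimpleGraph V}

lemma aux_getVert_mem_support {u v : V} (p : G.Walk u v) (n : ℕ) :
    p.getVert n ∈ p.support := by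
  rcases le_or_gt n p.length with h | h
  · exact Walk.mem_support_iff_exists_getVert.mpr ⟨n, rfl, h⟩
  · rw [Walk.getVert_of_length_le _ h.le]; exact p.end_mem_support

lemma aux_mem_edges_of_getVert {u v : V} (p : G.Walk u v) :
    ∀ k, k < p.length → s(p.getVert k, p.getVert (k + 1)) ∈ p.edges := by
  induction p with
  | nil => intro k hk; simp at hk
  | cons h q ih =>
    intro k hk
    cases k with
    | zero =>
      simp only [Walk.getVert_zero, Walk.getVert_cons_succ, Walk.edges_cons]
      exact List.mem_cons_self
    | succ n =>
      rw [Walk.getVert_cons_succ, Walk.getVert_cons_succ, Walk.edges_cons]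
      exact List.mem_cons_of_mem _ (ih n (by simpa [Walk.length_cons] using Nat.succ_lt_succ_iff.mp hk))

lemma aux_getVert_injOn_of_nodup {u v : V} {p : G.Walk u v} (h : p.support.Nodup) :
    ∀ m, m ≤ p.length → ∀ n, n ≤ p.length → p.getVert m = p.getVert n → m = n := by
  induction p with
  | nil => intro m hm n hn _; simp at hm hn; omega
  | cons ha q ih =>
    rw [Walk.support_cons, List.nodup_cons] at h
    intro m hm n hn heq
    match m, n with
    | 0, 0 => rfl
    | 0, n + 1 =>
      rw [Walk.getVert_zero, Walk.getVert_cons_succ] at heq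
      exact absurd (heq ▸ aux_getVert_mem_support q n) h.1
    | m + 1, 0 =>
      rw [Walk.getVert_zero, Walk.getVert_cons_succ] at heq
      exact absurd (heq ▸ aux_getVert_mem_support q m) h.1
    | m + 1, n + 1 =>
      rw [Walk.getVert_cons_succ, Walk.getVert_cons_succ] at heq
      have := ih h.2 m (by simpa [Walk.length_cons] using hm) n
        (by simpa [Walk.length_cons] using hn) heq
      omega

lemma aux_cycle_getVert_injOn {v : V} {c : G.Walk v v} (hc : c.IsCycle) :
    ∀ m, 1 ≤ m → m ≤ c.length → ∀ n, 1 ≤ n → n ≤ c.length →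
      c.getVert m = c.getVert n → m = n := by
  have h3 := hc.three_le_length
  have hnil : ¬ c.Nil := by rw [Walk.nil_iff_length_eq]; omega
  have hnd : c.tail.support.Nodup := by
    rw [Walk.support_tail_of_not_nil c hnil]; exact hc.2
  have hl : c.tail.length + 1 = c.length := Walk.length_tail_add_one hnil
  intro m h1m hm n h1n hn heq
  have e1 : c.tail.getVert (m - 1) = c.tail.getVert (n - 1) := by
    rw [Walk.getVert_tail, Walk.getVert_tail]
    have hm' : m - 1 + 1 = m := by omega
    have hn' : n - 1 + 1 = n := by omega
    rw [hm', hn']; exact heq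
  have := aux_getVert_injOn_of_nodup hnd (m - 1) (by omega) (n - 1) (by omega) e1
  omega

lemma aux_length_rotate [DecidableEq V] {v u : V} (c : G.Walk v v) (h : u ∈ c.support) :
    (c.rotate u h).length = c.length := by
  have := congr_arg Walk.length (c.take_spec h)
  rw [Walk.length_append] at this
  rw [Walk.rotate, Walk.length_append]
  omega

lemma aux_end_mem_tail_support {w : V} (p : G.Walk w w) (hp : ¬ p.Nil) :
    w ∈ p.support.tail := by
  rw [← Walk.support_tail_of_not_nil p hp]
  exact Walk.end_mem_support _

lemma aux_mem_support_rotate [DecidableEq V] {v u : V} (c : G.Walk v v) (hnil : ¬ c.Nil)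
    (h : u ∈ c.support) {x : V} (hx : x ∈ (c.rotate u h).support) : x ∈ c.support := by
  have hrnil : ¬ (c.rotate u h).Nil := by
    rw [Walk.nil_iff_length_eq, aux_length_rotate]
    rw [Walk.nil_iff_length_eq] at hnil
    exact hnil
  rw [Walk.support_eq_cons (c.rotate u h)] at hx
  rcases List.mem_cons.mp hx with rfl | hx
  · exact h
  · have := (Walk.support_rotate c u h).perm.mem_iff.mp hx
    exact List.mem_of_mem_tail this

/-- From a cycle `r` at `u₁` containing the edge `s(u₁, u₂)`, extract a path from `u₂` to `u₁`
of length `r.length - 1` inside `r`. -/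
lemma aux_exists_path_of_cycle_edge {u₁ u₂ : V} {r : G.Walk u₁ u₁} (hr : r.IsCycle)
    (he : s(u₁, u₂) ∈ r.edges) :
    ∃ Q : G.Walk u₂ u₁, Q.IsPath ∧ Q.length + 1 = r.length ∧ ∀ x ∈ Q.support, x ∈ r.support := by
  have h3 := hr.three_le_length
  have hnil : ¬ r.Nil := by rw [Walk.nil_iff_length_eq]; omega
  obtain ⟨y, ha, t, rfl⟩ := Walk.not_nil_iff.mp hnil
  rw [Walk.cons_isCycle_iff] at hr
  rw [Walk.edges_cons, List.mem_cons] at he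
  rcases he with he | he
  · obtain rfl : u₂ = y := Sym2.congr_right.mp he
    exact ⟨t, hr.1, by simp [Walk.length_cons], fun x hx => by
      rw [Walk.support_cons]; exact List.mem_cons_of_mem _ hx⟩
  · have htnil : ¬ t.Nil := by
      rw [Walk.nil_iff_length_eq]
      intro h0
      have : t.edges = [] := List.length_eq_zero_iff.mp (by rw [Walk.length_edges]; exact h0)
      rw [this] at he; simp at he
    have htrev : ¬ t.reverse.Nil := by
      rwa [Walk.nil_iff_length_eq, Walk.length_reverse, ← Walk.nil_iff_length_eq]
    obtain ⟨y₂, ha₂, t₂, ht₂⟩ := Walk.not_nil_iff.mp htrev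
    have hrp : t.reverse.IsPath := hr.1.reverse
    rw [ht₂, Walk.cons_isPath_iff] at hrp
    have he' : s(u₁, u₂) ∈ t.reverse.edges := by
      rw [Walk.edges_reverse, List.mem_reverse]; exact he
    rw [ht₂, Walk.edges_cons, List.mem_cons] at he'
    rcases he' with he' | he'
    · obtain rfl : u₂ = y₂ := Sym2.congr_right.mp he'
      refine ⟨t₂.append (Walk.cons ha.symm Walk.nil), ?_, ?_, ?_⟩
      · rw [Walk.isPath_def, Walk.support_append]
        simp only [Walk.support_cons, Walk.support_nil, List.tail_cons]
        rw [List.nodup_append]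
        refine ⟨hrp.1.support_nodup, List.nodup_singleton _, ?_⟩
        intro x hx y hx'
        rw [List.mem_singleton] at hx'
        subst hx'
        exact fun h => hrp.2 (h ▸ hx)
      · have : t.reverse.length = t₂.length + 1 := by rw [ht₂, Walk.length_cons]
        rw [Walk.length_reverse] at this
        simp only [Walk.length_append, Walk.length_cons, Walk.length_nil, Walk.length_cons]
        omega
      · intro x hx
        rw [Walk.mem_support_append_iff] at hx
        rcases hx with hx | hx
        · have : x ∈ t.reverse.support := by rw [ht₂, Walk.support_cons]; exact List.mem_cons_of_mem _ hx
          rw [Walk.support_reverse, List.mem_reverse] at this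
          rw [Walk.support_cons]; exact List.mem_cons_of_mem _ this
        · have hx' : x = y ∨ x = u₁ := by simpa using hx
          rcases hx' with rfl | rfl
          · rw [Walk.support_cons]; exact List.mem_cons_of_mem _ t.start_mem_support
          · exact Walk.start_mem_support _
    · exact absurd (Walk.fst_mem_support_of_mem_edges _ he') hrp.2

end Aux


lemma aux_exists_matching_of_edges {V : Type*} {G : SimpleGraph V} {n : ℕ}
    (f g : Fin n → V) (hadj : ∀ k, G.Adj (f k) (g k))
    (hf : Function.Injective f) (hg : Function.Injective g)
    (hfg : ∀ k l, f k ≠ g l) :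
    ∃ M : G.Subgraph, M.IsMatching ∧ M.edgeSet.ncard = n := by
  refine ⟨⟨Set.range f ∪ Set.range g,
    fun x y => ∃ k, (x = f k ∧ y = g k) ∨ (x = g k ∧ y = f k), ?_, ?_, ?_⟩, ?_, ?_⟩
  · rintro x y ⟨k, ⟨rfl, rfl⟩ | ⟨rfl, rfl⟩⟩
    exacts [hadj k, (hadj k).symm]
  · rintro x y ⟨k, ⟨rfl, -⟩ | ⟨rfl, -⟩⟩
    exacts [Or.inl ⟨k, rfl⟩, Or.inr ⟨k, rfl⟩]
  · constructor; rintro x y ⟨k, ⟨h1, h2⟩ | ⟨h1, h2⟩⟩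
    exacts [⟨k, Or.inr ⟨h2, h1⟩⟩, ⟨k, Or.inl ⟨h2, h1⟩⟩]
  · rintro x (⟨k, rfl⟩ | ⟨k, rfl⟩)
    · refine ⟨g k, ⟨k, Or.inl ⟨rfl, rfl⟩⟩, ?_⟩
      rintro y ⟨l, ⟨hfl, rfl⟩ | ⟨hgl, rfl⟩⟩
      · rw [hf hfl]
      · exact absurd hgl (hfg k l)
    · refine ⟨f k, ⟨k, Or.inr ⟨rfl, rfl⟩⟩, ?_⟩
      rintro y ⟨l, ⟨hfl, rfl⟩ | ⟨hgl, rfl⟩⟩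
      · exact absurd hfl.symm (hfg l k)
      · rw [hg hgl]
  · have hinj : Function.Injective (fun k => s(f k, g k)) := by
      intro k l h
      simp only [Sym2.eq_iff] at h
      rcases h with ⟨h1, _⟩ | ⟨h1, _⟩
      · exact hf h1
      · exact absurd h1 (hfg k l)
    have hset : (⟨Set.range f ∪ Set.range g,
        fun x y => ∃ k, (x = f k ∧ y = g k) ∨ (x = g k ∧ y = f k), by
          rintro x y ⟨k, ⟨rfl, rfl⟩ | ⟨rfl, rfl⟩⟩; exacts [hadj k, (hadj k).symm], by
          rintro x y ⟨k, ⟨rfl, -⟩ | ⟨rfl, -⟩⟩; exacts [Or.inl ⟨k, rfl⟩, Or.inr ⟨k, rfl⟩], by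
          constructor; rintro x y ⟨k, ⟨h1, h2⟩ | ⟨h1, h2⟩⟩
          exacts [⟨k, Or.inr ⟨h2, h1⟩⟩, ⟨k, Or.inl ⟨h2, h1⟩⟩]⟩ :
        G.Subgraph).edgeSet = Set.range (fun k => s(f k, g k)) := by
      ext e
      induction e using Sym2.ind with
      | _ x y =>
        rw [Subgraph.mem_edgeSet]
        simp only [Set.mem_range]
        constructor
        · rintro ⟨k, ⟨rfl, rfl⟩ | ⟨rfl, rfl⟩⟩
          exacts [⟨k, rfl⟩, ⟨k, Sym2.eq_swap⟩]
        · rintro ⟨k, hk⟩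
          rw [Sym2.eq_iff] at hk
          rcases hk with ⟨rfl, rfl⟩ | ⟨rfl, rfl⟩
          exacts [⟨k, Or.inl ⟨rfl, rfl⟩⟩, ⟨k, Or.inr ⟨rfl, rfl⟩⟩]
    rw [hset, ← Set.image_univ, Set.ncard_image_of_injective _ hinj, Set.ncard_univ,
      Nat.card_eq_fintype_card, Fintype.card_fin]

/-- The vertex set `V(G) \ (V(C) ∪ {x₀})` is an independent set in `G`. -/
theorem stmt_4 {V : Type*} [Fintype V] [DecidableEq V] (G : SimpleGraph V)
    (hnotham : ¬ G.IsHamiltonian)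
    (s : ℕ) (hs : 2 ≤ s)
    (hκ : vertexConnectivity G = s) (hm : matchingNumber G = s)
    {v : V} (c : G.Walk v v) (hc : c.IsCycle)
    (hlong : ∀ (w : V) (d : G.Walk w w), d.IsCycle → d.length ≤ c.length)
    (x₀ : V) (hx₀ : x₀ ∉ c.support)
    (u : Fin s → V) (huinj : Function.Injective u)
    (humem : ∀ i, u i ∈ c.support)
    (P : ∀ i : Fin s, G.Walk x₀ (u i)) (hP : ∀ i, (P i).IsPath)
    (hdisj : ∀ i j, i ≠ j → ∀ w, w ∈ (P i).support → w ∈ (P j).support → w = x₀)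
    (honC : ∀ i, ∀ w ∈ (P i).support, w ∈ c.support → w = u i) :
    ∀ a b : V, a ∉ c.support → a ≠ x₀ → b ∉ c.support → b ≠ x₀ → ¬ G.Adj a b := by
  intro a b haC hax₀ hbC hbx₀ hab
  have h3 := hc.three_le_length
  have hcnil : ¬ c.Nil := by rw [Walk.nil_iff_length_eq]; omega
  have hx₀ne : ∀ i, x₀ ≠ u i := fun i h => hx₀ (h ▸ humem i)
  -- Key claim: no edge of the cycle joins two of the attachment vertices
  have hK : ∀ i j, i ≠ j → s(u i, u j) ∉ c.edges := by
    intro i j hij he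
    have hui := humem i
    have hr : (c.rotate (u i) hui).IsCycle := hc.rotate hui
    have he_r : s(u i, u j) ∈ (c.rotate (u i) hui).edges :=
      ((Walk.rotate_edges c (u i) hui).mem_iff).mpr he
    obtain ⟨Q, hQp, hQl, hQsub⟩ := aux_exists_path_of_cycle_edge hr he_r
    have hQlen : Q.length + 1 = c.length := by rwa [aux_length_rotate] at hQl
    have hQsubC : ∀ x ∈ Q.support, x ∈ c.support := fun x hx =>
      aux_mem_support_rotate c hcnil hui (hQsub x hx)
    have hPinil : ¬ (P i).Nil := Walk.not_nil_of_ne (hx₀ne i)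
    have hPjnil : ¬ (P j).Nil := Walk.not_nil_of_ne (hx₀ne j)
    obtain ⟨z, hz, q, hq⟩ := Walk.not_nil_iff.mp hPinil
    have hqp : q.IsPath ∧ x₀ ∉ q.support := by
      have := hP i; rw [hq, Walk.cons_isPath_iff] at this; exact this
    have hqsubPi : ∀ x ∈ q.support, x ∈ (P i).support := by
      intro x hx; rw [hq, Walk.support_cons]; exact List.mem_cons_of_mem _ hx
    -- membership transfer lemmas
    have hQrevmem : ∀ x, x ∈ Q.reverse.support → x ∈ Q.support := by
      intro x hx; rwa [Walk.support_reverse, List.mem_reverse] at hx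
    have hPjrevmem : ∀ x, x ∈ (P j).reverse.support → x ∈ (P j).support := by
      intro x hx; rwa [Walk.support_reverse, List.mem_reverse] at hx
    have hQrevnd : Q.reverse.support.Nodup := (Walk.isPath_def _).mp hQp.reverse
    have hPjrevnd : (P j).reverse.support.Nodup := (Walk.isPath_def _).mp (hP j).reverse
    have hui_not_tail : u i ∉ Q.reverse.support.tail := by
      have := hQrevnd
      rw [Walk.support_eq_cons] at this
      exact (List.nodup_cons.mp this).1
    have huj_not_tail : u j ∉ (P j).reverse.support.tail := by
      have := hPjrevnd
      rw [Walk.support_eq_cons] at this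
      exact (List.nodup_cons.mp this).1
    set W : G.Walk x₀ x₀ := Walk.cons hz (q.append (Q.reverse.append (P j).reverse)) with hW
    have hWcyc : W.IsCycle := by
      rw [hW, Walk.cons_isCycle_iff]
      constructor
      · rw [Walk.isPath_def, Walk.support_append, Walk.tail_support_append]
        rw [List.nodup_append, List.nodup_append]
        refine ⟨(Walk.isPath_def _).mp hqp.1, ⟨?_, ?_, ?_⟩, ?_⟩
        · exact hQrevnd.tail
        · exact hPjrevnd.tail
        · -- disjoint Q.rev.tail / Pj.rev.tail
          rintro x hx1 _ hx2 rfl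
          have hxQ : x ∈ Q.support := hQrevmem x (List.mem_of_mem_tail hx1)
          have hxPj : x ∈ (P j).support := hPjrevmem x (List.mem_of_mem_tail hx2)
          have : x = u j := honC j x hxPj (hQsubC x hxQ)
          subst this
          exact huj_not_tail hx2
        · -- disjoint q.support / rest
          rintro x hxq _ hx2 rfl
          rcases List.mem_append.mp hx2 with hx | hx
          · have hxQ : x ∈ Q.support := hQrevmem x (List.mem_of_mem_tail hx)
            have : x = u i := honC i x (hqsubPi x hxq) (hQsubC x hxQ)
            subst this
            exact hui_not_tail hx
          · have hxPj : x ∈ (P j).support := hPjrevmem x (List.mem_of_mem_tail hx)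
            have : x = x₀ := hdisj i j hij x (hqsubPi x hxq) hxPj
            subst this
            exact hqp.2 hxq
      · -- first edge not repeated
        intro hmem
        rw [Walk.edges_append, Walk.edges_append, List.mem_append, List.mem_append] at hmem
        rcases hmem with hmem | hmem | hmem
        · exact hqp.2 (Walk.fst_mem_support_of_mem_edges q hmem)
        · have : x₀ ∈ Q.reverse.support := Walk.fst_mem_support_of_mem_edges _ hmem
          exact hx₀ (hQsubC x₀ (hQrevmem x₀ this))
        · have hzPj : z ∈ (P j).support :=
            hPjrevmem z (Walk.snd_mem_support_of_mem_edges _ hmem)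
          have hzPi : z ∈ (P i).support := hqsubPi z q.start_mem_support
          have : z = x₀ := hdisj i j hij z hzPi hzPj
          subst this
          exact hqp.2 q.start_mem_support
    have hWlen : W.length = q.length + 1 + Q.length + (P j).length := by
      rw [hW]
      simp only [Walk.length_cons, Walk.length_append, Walk.length_reverse]
      omega
    have hPjlen : 0 < (P j).length := Walk.not_nil_iff_lt_length.mp hPjnil
    have := hlong x₀ W hWcyc
    omega
  have hKgetVert : ∀ i j, i ≠ j → ∀ k, k < c.length →
      c.getVert k = u i → c.getVert (k + 1) = u j → False := by
    intro i j hij k hk h1 h2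
    exact hK i j hij (h1 ▸ h2 ▸ aux_mem_edges_of_getVert c k hk)
  have hex : ∀ i, ∃ k, k < c.length ∧ c.getVert k = u i := by
    intro i
    obtain ⟨n, hn1, hn2⟩ := Walk.mem_support_iff_exists_getVert.mp (humem i)
    rcases lt_or_eq_of_le hn2 with h | h
    · exact ⟨n, h, hn1⟩
    · refine ⟨0, by omega, ?_⟩
      rw [Walk.getVert_zero]
      rw [h, Walk.getVert_length] at hn1
      exact hn1.symm ▸ rfl
  choose k hk1 hk2 using hex
  set σ : Fin s → V := fun i => c.getVert (k i + 1) with hσdef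
  have hσadj : ∀ i, G.Adj (u i) (σ i) := fun i => (hk2 i) ▸ c.adj_getVert_succ (hk1 i)
  have hσC : ∀ i, σ i ∈ c.support := fun i => aux_getVert_mem_support c _
  have hσu : ∀ i j, σ i ≠ u j := by
    intro i j h
    by_cases hij : i = j
    · subst hij
      exact G.irrefl (h ▸ hσadj i)
    · exact hKgetVert i j hij (k i) (hk1 i) (hk2 i) h
  have hσinj : Function.Injective σ := by
    intro i j h
    have hkj : k i + 1 = k j + 1 := by
      refine aux_cycle_getVert_injOn hc (k i + 1) (by omega) ?_ (k j + 1) (by omega) ?_ h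
      · have := hk1 i; omega
      · have := hk1 j; omega
    exact huinj (by rw [← hk2 i, ← hk2 j]; congr 1; omega)
  -- build the matching
  have hadj : ∀ m : Fin (s + 1), G.Adj ((Fin.cons a u : Fin (s+1) → V) m) ((Fin.cons b σ : Fin (s+1) → V) m) := by
    intro m
    cases m using Fin.cases with
    | zero => simpa using hab
    | succ i => simpa using hσadj i
  have hfinj : Function.Injective (Fin.cons a u : Fin (s + 1) → V) := by
    rw [Fin.cons_injective_iff]
    exact ⟨fun ⟨i, hi⟩ => haC (hi ▸ humem i), huinj⟩
  have hginj : Function.Injective (Fin.cons b σ : Fin (s + 1) → V) := by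
    rw [Fin.cons_injective_iff]
    exact ⟨fun ⟨i, hi⟩ => hbC (hi ▸ hσC i), hσinj⟩
  have hfg : ∀ m l, (Fin.cons a u : Fin (s + 1) → V) m ≠ (Fin.cons b σ : Fin (s + 1) → V) l := by
    intro m l
    cases m using Fin.cases with
    | zero =>
      cases l using Fin.cases with
      | zero => simpa using hab.ne
      | succ j =>
        simp only [Fin.cons_zero, Fin.cons_succ]
        intro h; exact haC (h ▸ hσC j)
    | succ i =>
      cases l using Fin.cases with
      | zero =>
        simp only [Fin.cons_zero, Fin.cons_succ]
        intro h; exact hbC (h ▸ humem i)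
      | succ j =>
        simp only [Fin.cons_succ]
        intro h; exact hσu j i h.symm
  obtain ⟨M, hM, hMcard⟩ := aux_exists_matching_of_edges _ _ hadj hfinj hginj hfg
  have hbdd : BddAbove {n | ∃ M : G.Subgraph, M.IsMatching ∧ M.edgeSet.ncard = n} := by
    refine ⟨Fintype.card (Sym2 V), ?_⟩
    rintro n ⟨N, -, rfl⟩
    have : N.edgeSet.ncard ≤ (Set.univ : Set (Sym2 V)).ncard :=
      Set.ncard_le_ncard (Set.subset_univ _) Set.finite_univ
    simpa [Set.ncard_univ, Nat.card_eq_fintype_card] using this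
  have hle : s + 1 ≤ matchingNumber G := le_csSup hbdd ⟨M, hM, hMcard⟩
  rw [hm] at hle
  omega
end

section
/- Let G be a non-Hamiltonian graph with κ(G) = m(G) = s ≥ 2, longest cycle C = u₁u₁⁺u₂u₂⁺⋯uₛuₛ⁺u₁, and x₀ ∉ V(C) adjacent (via disjoint paths) to u₁,...,uₛ. Then every vertex x ∈ V(G) \ (V(C) ∪ {x₀}) satisfies N_C(x) = {u₁, u₂, ..., uₛ}. -/
open SimpleGraph Finset

lemma walk_support_getElem {V : Type*} {G : SimpleGraph V} :
    ∀ {a b : V} (p : G.Walk a b) (i : ℕ) (h : i < p.support.length),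
      p.support[i] = p.getVert i := by
  intro a b p
  induction p with
  | nil => intro i h; simp at h; subst h; simp
  | cons hadj q ih =>
    intro i h
    cases i with
    | zero => simp
    | succ n =>
      simp only [SimpleGraph.Walk.support_cons, List.getElem_cons_succ,
        SimpleGraph.Walk.getVert_cons_succ]
      exact ih n (by simpa [SimpleGraph.Walk.support_cons] using h)

lemma cycle_getVert_inj {V : Type*} {G : SimpleGraph V} {v : V} {c : G.Walk v v}
    (hc : c.IsCycle) {k l : ℕ} (hk : k < c.length) (hl : l < c.length)
    (h : c.getVert k = c.getVert l) : k = l := by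
  have hnodup := hc.2
  have hlen : c.support.length = c.length + 1 := SimpleGraph.Walk.length_support c
  have htail : ∀ i (hi : i < c.support.tail.length), c.support.tail[i] = c.getVert (i+1) := by
    intro i hi
    have h1 : i + 1 < c.support.length := by simp [List.length_tail] at hi; omega
    rw [List.getElem_tail, walk_support_getElem]
  have key : ∀ {a b : ℕ}, a ≤ c.length → b ≤ c.length → 1 ≤ a → 1 ≤ b →
      c.getVert a = c.getVert b → a = b := by
    intro a b ha hb ha1 hb1 hab
    have hta : a - 1 < c.support.tail.length := by simp [List.length_tail, hlen]; omega
    have htb : b - 1 < c.support.tail.length := by simp [List.length_tail, hlen]; omega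
    have := (List.Nodup.getElem_inj_iff hnodup (hi := hta) (hj := htb)).mp ?_
    · omega
    · rw [htail _ hta, htail _ htb]
      have e1 : a - 1 + 1 = a := by omega
      have e2 : b - 1 + 1 = b := by omega
      rw [e1, e2]; exact hab
  rcases Nat.eq_zero_or_pos k with rfl | hk1
  · rcases Nat.eq_zero_or_pos l with rfl | hl1
    · rfl
    · exfalso
      have h0 := h
      rw [SimpleGraph.Walk.getVert_zero] at h0
      have h1 : c.getVert c.length = c.getVert l := by
        rw [SimpleGraph.Walk.getVert_length]; exact h0
      have := key (le_refl _) (le_of_lt hl) (by omega) hl1 h1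
      omega
  · rcases Nat.eq_zero_or_pos l with rfl | hl1
    · exfalso
      have h0 := h
      rw [SimpleGraph.Walk.getVert_zero] at h0
      have h1 : c.getVert k = c.getVert c.length := by
        rw [SimpleGraph.Walk.getVert_length]; exact h0
      have := key (le_of_lt hk) (le_refl _) hk1 (by omega) h1
      omega
    · exact key (le_of_lt hk) (le_of_lt hl) hk1 hl1 h

lemma exists_matching_ncard {V : Type*} (G : SimpleGraph V) {n : ℕ} (f g : Fin n → V)
    (hadj : ∀ i, G.Adj (f i) (g i))
    (hdis : ∀ i j : Fin n, i ≠ j → f i ≠ f j ∧ f i ≠ g j ∧ g i ≠ f j ∧ g i ≠ g j) :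
    ∃ M : G.Subgraph, M.IsMatching ∧ M.edgeSet.ncard = n := by
  refine ⟨⨆ i, G.subgraphOfAdj (hadj i), ?_, ?_⟩
  · refine Subgraph.IsMatching.iSup (fun i => Subgraph.IsMatching.subgraphOfAdj _) ?_
    intro i j hij
    rw [SimpleGraph.support_subgraphOfAdj, SimpleGraph.support_subgraphOfAdj]
    rw [Set.disjoint_left]
    rintro a (rfl | rfl) (h | h) <;>
      first
      | exact (hdis i j hij).1 h
      | exact (hdis i j hij).2.1 h
      | exact (hdis i j hij).2.2.1 h
      | exact (hdis i j hij).2.2.2 h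
  · rw [Subgraph.edgeSet_iSup]
    have he : ∀ i : Fin n, (G.subgraphOfAdj (hadj i)).edgeSet = {s(f i, g i)} :=
      fun i => SimpleGraph.edgeSet_subgraphOfAdj _
    have : (⋃ i, (G.subgraphOfAdj (hadj i)).edgeSet) = Set.range (fun i => s(f i, g i)) := by
      simp only [he, Set.range_eq_iUnion]
    rw [this, ← Set.image_univ, Set.ncard_image_of_injective _ ?_, Set.ncard_univ,
      Nat.card_eq_fintype_card, Fintype.card_fin]
    intro i j hij
    by_contra hne
    rw [Sym2.eq_iff] at hij
    rcases hij with ⟨h1, h2⟩ | ⟨h1, h2⟩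
    · exact (hdis i j hne).1 h1
    · exact (hdis i j hne).2.1 h1

lemma matching_ncard_le {V : Type*} [Fintype V] (G : SimpleGraph V) (M : G.Subgraph)
    (hM : M.IsMatching) : M.edgeSet.ncard ≤ matchingNumber G := by
  apply le_csSup
  · refine ⟨Nat.card (Sym2 V), ?_⟩
    rintro n ⟨M', _, rfl⟩
    have : M'.edgeSet.ncard ≤ (Set.univ : Set (Sym2 V)).ncard :=
      Set.ncard_le_ncard (Set.subset_univ _) Set.finite_univ
    simpa [Set.ncard_univ] using this
  · exact ⟨M, hM, rfl⟩

/-- Every vertex `x ∈ V(G) \ (V(C) ∪ {x₀})` satisfies `N_C(x) = {u₁, …, uₛ}`. -/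
theorem stmt_5 {V : Type*} [Fintype V] [DecidableEq V] (G : SimpleGraph V)
    (hnotham : ¬ G.IsHamiltonian)
    (s : ℕ) (hs : 2 ≤ s)
    (hκ : vertexConnectivity G = s) (hm : matchingNumber G = s)
    {v : V} (c : G.Walk v v) (hc : c.IsCycle)
    (hlong : ∀ (w : V) (d : G.Walk w w), d.IsCycle → d.length ≤ c.length)
    (hlen : c.length = 2 * s)
    (u usucc : Fin s → V)
    (hu : ∀ i : Fin s, c.getVert (2 * ↑i) = u i)
    (husucc : ∀ i : Fin s, c.getVert (2 * ↑i + 1) = usucc i)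
    (x₀ : V) (hx₀ : x₀ ∉ c.support)
    (hadj : ∀ i, G.Adj x₀ (u i)) :
    ∀ x : V, x ∉ c.support → x ≠ x₀ →
      ∀ w ∈ c.support, (G.Adj x w ↔ ∃ i : Fin s, w = u i) := by
  classical
  intro x hxs hxne
  have hspos : 0 < 2 * s := by omega
  set w : ℕ → V := fun k => c.getVert (k % (2 * s)) with hwdef
  have hmodlt : ∀ k : ℕ, k % (2 * s) < 2 * s := fun k => Nat.mod_lt _ hspos
  have hwsupp : ∀ k, w k ∈ c.support := by
    intro k
    rw [SimpleGraph.Walk.mem_support_iff_exists_getVert]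
    exact ⟨k % (2 * s), rfl, by rw [hlen]; exact le_of_lt (hmodlt k)⟩
  have hwinj : ∀ a b : ℕ, w a = w b → a % (2 * s) = b % (2 * s) := by
    intro a b hab
    exact cycle_getVert_inj hc (by rw [hlen]; exact hmodlt a) (by rw [hlen]; exact hmodlt b) hab
  have hwne : ∀ a b : ℕ, a % (2 * s) ≠ b % (2 * s) → w a ≠ w b :=
    fun a b h hc' => h (hwinj a b hc')
  have hxw : ∀ k, x ≠ w k := fun k h => hxs (h ▸ hwsupp k)
  have hx₀w : ∀ k, x₀ ≠ w k := fun k h => hx₀ (h ▸ hwsupp k)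
  have hwadj : ∀ k, G.Adj (w k) (w (k + 1)) := by
    intro k
    have hradj := SimpleGraph.Walk.adj_getVert_succ c (i := k % (2 * s)) (by rw [hlen]; exact hmodlt k)
    have hmod : (k + 1) % (2 * s) = (k % (2 * s) + 1) % (2 * s) := by
      conv_lhs => rw [← Nat.mod_add_mod]
    rcases Nat.lt_or_ge (k % (2 * s) + 1) (2 * s) with h | h
    · have : (k + 1) % (2 * s) = k % (2 * s) + 1 := by rw [hmod, Nat.mod_eq_of_lt h]
      show G.Adj (c.getVert (k % (2 * s))) (c.getVert ((k + 1) % (2 * s)))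
      rw [this]; exact hradj
    · have he : k % (2 * s) + 1 = 2 * s := by have := hmodlt k; omega
      have h0 : (k + 1) % (2 * s) = 0 := by rw [hmod, he, Nat.mod_self]
      show G.Adj (c.getVert (k % (2 * s))) (c.getVert ((k + 1) % (2 * s)))
      rw [h0]
      have : c.getVert (k % (2 * s) + 1) = c.getVert 0 := by
        rw [he, ← hlen, SimpleGraph.Walk.getVert_length, SimpleGraph.Walk.getVert_zero]
      rw [← this]; exact hradj
  have hu' : ∀ i : Fin s, u i = w (2 * i.val) := by
    intro i
    rw [← hu i]
    show c.getVert (2 * i.val) = c.getVert (2 * i.val % (2 * s))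
    rw [Nat.mod_eq_of_lt (by omega)]
  -- arithmetic helpers
  have h2dvd : (2 : ℕ) ∣ 2 * s := dvd_mul_right 2 s
  have hpar : ∀ a b : ℕ, a % 2 ≠ b % 2 → a % (2 * s) ≠ b % (2 * s) := by
    intro a b h hcon
    exact h (by rw [← Nat.mod_mod_of_dvd a h2dvd, ← Nat.mod_mod_of_dvd b h2dvd, hcon])
  have hsame : ∀ a b : ℕ, a < 2 * s → b < 2 * s → a ≠ b → a % (2 * s) ≠ b % (2 * s) := by
    intro a b ha hb h
    rw [Nat.mod_eq_of_lt ha, Nat.mod_eq_of_lt hb]; exact h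
  have heven : ∀ p q : ℕ, p < s → q < s → p ≠ q →
      (2 * p + 2) % (2 * s) ≠ (2 * q + 2) % (2 * s) := by
    intro p q hp hq hpq
    by_cases hp' : p + 1 = s
    · have e1 : 2 * p + 2 = 2 * s := by omega
      rw [e1, Nat.mod_self, Nat.mod_eq_of_lt (by omega)]
      omega
    · by_cases hq' : q + 1 = s
      · have e1 : 2 * q + 2 = 2 * s := by omega
        rw [e1, Nat.mod_self, Nat.mod_eq_of_lt (by omega)]
        omega
      · rw [Nat.mod_eq_of_lt (by omega), Nat.mod_eq_of_lt (by omega)]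
        omega
  have hwkey : ∀ a b : ℕ, a < s → b < s → a ≠ b →
      (w (2*a+1) ≠ w (2*b+1) ∧ w (2*a+1) ≠ w (2*b+2)) ∧
      w (2*a+2) ≠ w (2*b+1) ∧ w (2*a+2) ≠ w (2*b+2) := by
    intro a b ha hb hab
    exact ⟨⟨hwne _ _ (hsame _ _ (by omega) (by omega) (by omega)),
           hwne _ _ (hpar _ _ (by omega))⟩,
           hwne _ _ (hpar _ _ (by omega)),
           hwne _ _ (heven a b ha hb hab)⟩
  -- x is not adjacent to x₀
  have key1 : ¬ G.Adj x x₀ := by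
    intro hA
    set f : Fin (s+1) → V := fun i => if i.val = 0 then x else w (2 * (i.val - 1)) with hf
    set g : Fin (s+1) → V := fun i => if i.val = 0 then x₀ else w (2 * (i.val - 1) + 1) with hg
    have hadjfg : ∀ i, G.Adj (f i) (g i) := by
      intro i
      by_cases h0 : i.val = 0
      · simp only [hf, hg]; rw [if_pos h0, if_pos h0]; exact hA
      · simp only [hf, hg]; rw [if_neg h0, if_neg h0]; exact hwadj _
    have hdisfg : ∀ i j : Fin (s+1), i ≠ j →
        f i ≠ f j ∧ f i ≠ g j ∧ g i ≠ f j ∧ g i ≠ g j := by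
      intro i j hij
      have hv : i.val ≠ j.val := fun h => hij (Fin.ext h)
      have hi' : i.val < s + 1 := i.isLt
      have hj' : j.val < s + 1 := j.isLt
      by_cases h0 : i.val = 0 <;> by_cases h1 : j.val = 0
      · exact absurd (h0.trans h1.symm) hv
      · simp only [hf, hg]; rw [if_pos h0, if_pos h0, if_neg h1, if_neg h1]
        exact ⟨hxw _, hxw _, hx₀w _, hx₀w _⟩
      · simp only [hf, hg]; rw [if_neg h0, if_neg h0, if_pos h1, if_pos h1]
        exact ⟨(hxw _).symm, (hx₀w _).symm, (hxw _).symm, (hx₀w _).symm⟩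
      · simp only [hf, hg]; rw [if_neg h0, if_neg h0, if_neg h1, if_neg h1]
        refine ⟨hwne _ _ (hsame _ _ (by omega) (by omega) (by omega)),
                hwne _ _ (hpar _ _ (by omega)),
                hwne _ _ (hpar _ _ (by omega)),
                hwne _ _ (hsame _ _ (by omega) (by omega) (by omega))⟩
    obtain ⟨M, hM1, hM2⟩ := exists_matching_ncard G f g hadjfg hdisfg
    have hle := matching_ncard_le G M hM1
    rw [hM2, hm] at hle
    omega
  -- x is not adjacent to any vertex outside the cycle other than x₀
  have key2 : ∀ y : V, y ∉ c.support → y ≠ x₀ → ¬ G.Adj x y := by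
    intro y hy hyx₀ hA
    have hyw : ∀ k, y ≠ w k := fun k h => hy (h ▸ hwsupp k)
    have hw0u : w 0 = u ⟨0, by omega⟩ := by
      rw [hu' ⟨0, by omega⟩]; norm_num
    set f : Fin (s+1) → V := fun i =>
      if i.val = 0 then x else if i.val = 1 then x₀ else w (2 * (i.val - 2) + 1) with hf
    set g : Fin (s+1) → V := fun i =>
      if i.val = 0 then y else if i.val = 1 then w 0 else w (2 * (i.val - 2) + 2) with hg
    have hadjfg : ∀ i, G.Adj (f i) (g i) := by
      intro i
      by_cases h0 : i.val = 0
      · simp only [hf, hg]; rw [if_pos h0, if_pos h0]; exact hA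
      · by_cases h1 : i.val = 1
        · simp only [hf, hg]; rw [if_neg h0, if_neg h0, if_pos h1, if_pos h1]
          rw [hw0u]; exact hadj _
        · simp only [hf, hg]; rw [if_neg h0, if_neg h0, if_neg h1, if_neg h1]
          have := hwadj (2 * (i.val - 2) + 1)
          rwa [show 2 * (i.val - 2) + 1 + 1 = 2 * (i.val - 2) + 2 by omega] at this
    have hdisfg : ∀ i j : Fin (s+1), i ≠ j →
        f i ≠ f j ∧ f i ≠ g j ∧ g i ≠ f j ∧ g i ≠ g j := by
      intro i j hij
      have hv : i.val ≠ j.val := fun h => hij (Fin.ext h)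
      have hi' : i.val < s + 1 := i.isLt
      have hj' : j.val < s + 1 := j.isLt
      by_cases h0 : i.val = 0 <;> by_cases h1 : j.val = 0
      · exact absurd (h0.trans h1.symm) hv
      · by_cases h2 : j.val = 1
        · simp only [hf, hg]
          rw [if_pos h0, if_pos h0, if_neg h1, if_neg h1, if_pos h2, if_pos h2]
          exact ⟨hxne, hxw _, hyx₀, hyw _⟩
        · simp only [hf, hg]
          rw [if_pos h0, if_pos h0, if_neg h1, if_neg h1, if_neg h2, if_neg h2]
          exact ⟨hxw _, hxw _, hyw _, hyw _⟩
      · by_cases h2 : i.val = 1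
        · simp only [hf, hg]
          rw [if_neg h0, if_neg h0, if_pos h1, if_pos h1, if_pos h2, if_pos h2]
          exact ⟨Ne.symm hxne, Ne.symm hyx₀, (hxw _).symm, (hyw _).symm⟩
        · simp only [hf, hg]
          rw [if_neg h0, if_neg h0, if_pos h1, if_pos h1, if_neg h2, if_neg h2]
          exact ⟨(hxw _).symm, (hyw _).symm, (hxw _).symm, (hyw _).symm⟩
      · by_cases h2 : i.val = 1 <;> by_cases h3 : j.val = 1
        · exact absurd (h2.trans h3.symm) hv
        · simp only [hf, hg]
          rw [if_neg h0, if_neg h0, if_pos h2, if_pos h2, if_neg h1, if_neg h1,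
            if_neg h3, if_neg h3]
          exact ⟨hx₀w _, hx₀w _, hwne _ _ (hsame _ _ (by omega) (by omega) (by omega)),
            hwne _ _ (hsame _ _ (by omega) (by omega) (by omega))⟩
        · simp only [hf, hg]
          rw [if_neg h0, if_neg h0, if_neg h2, if_neg h2, if_neg h1, if_neg h1,
            if_pos h3, if_pos h3]
          exact ⟨(hx₀w _).symm, hwne _ _ (hsame _ _ (by omega) (by omega) (by omega)),
            (hx₀w _).symm, hwne _ _ (hsame _ _ (by omega) (by omega) (by omega))⟩
        · simp only [hf, hg]
          rw [if_neg h0, if_neg h0, if_neg h2, if_neg h2, if_neg h1, if_neg h1,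
            if_neg h3, if_neg h3]
          exact ⟨hwne _ _ (hsame _ _ (by omega) (by omega) (by omega)),
            hwne _ _ (hpar _ _ (by omega)),
            hwne _ _ (hpar _ _ (by omega)),
            hwne _ _ (hsame _ _ (by omega) (by omega) (by omega))⟩
    obtain ⟨M, hM1, hM2⟩ := exists_matching_ncard G f g hadjfg hdisfg
    have hle := matching_ncard_le G M hM1
    rw [hM2, hm] at hle
    omega
  -- x is not adjacent to any successor vertex
  have key3 : ∀ p : ℕ, p < s → ¬ G.Adj x (w (2 * p + 1)) := by
    intro p hp hA
    have hane : ∀ r : ℕ, 1 ≤ r → r < s → (p + r) % s ≠ p := by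
      intro r h1 h2 hcon
      have hme : (p + r) ≡ (p + 0) [MOD s] := by
        show (p + r) % s = (p + 0) % s
        rw [hcon, Nat.add_zero, Nat.mod_eq_of_lt hp]
      have h3 : r ≡ 0 [MOD s] := Nat.ModEq.add_left_cancel (Nat.ModEq.refl p) hme
      have h4 : r % s = 0 % s := h3
      rw [Nat.mod_eq_of_lt h2, Nat.zero_mod] at h4
      omega
    have hainj : ∀ r r' : ℕ, r < s → r' < s → (p + r) % s = (p + r') % s → r = r' := by
      intro r r' h1 h2 hcon
      have h3 : r ≡ r' [MOD s] := Nat.ModEq.add_left_cancel (Nat.ModEq.refl p) hcon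
      have h4 : r % s = r' % s := h3
      rwa [Nat.mod_eq_of_lt h1, Nat.mod_eq_of_lt h2] at h4
    have hw2p2 : w (2 * p + 2) = u ⟨(p + 1) % s, Nat.mod_lt _ (by omega)⟩ := by
      rw [hu']
      have hlt : (p + 1) % s < s := Nat.mod_lt _ (by omega)
      have e : (2 * p + 2) % (2 * s) = 2 * ((p + 1) % s) := by
        rw [show 2 * p + 2 = 2 * (p + 1) by ring]
        exact Nat.mul_mod_mul_left 2 (p + 1) s
      show c.getVert ((2 * p + 2) % (2 * s)) = c.getVert (2 * ((p + 1) % s) % (2 * s))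
      rw [e, Nat.mod_eq_of_lt (show 2 * ((p + 1) % s) < 2 * s by omega)]
    set f : Fin (s+1) → V := fun i =>
      if i.val = 0 then x else if i.val = 1 then x₀
      else w (2 * ((p + i.val - 1) % s) + 1) with hf
    set g : Fin (s+1) → V := fun i =>
      if i.val = 0 then w (2 * p + 1) else if i.val = 1 then w (2 * p + 2)
      else w (2 * ((p + i.val - 1) % s) + 2) with hg
    have haval : ∀ i : Fin (s+1), (p + i.val - 1) % s < s := fun i => Nat.mod_lt _ (by omega)
    have hanep : ∀ i : Fin (s+1), i.val ≠ 0 → i.val ≠ 1 → (p + i.val - 1) % s ≠ p := by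
      intro i hi0 hi1
      have e1 : p + i.val - 1 = p + (i.val - 1) := by omega
      rw [e1]
      exact hane _ (by omega) (by omega)
    have hadjfg : ∀ i, G.Adj (f i) (g i) := by
      intro i
      by_cases h0 : i.val = 0
      · simp only [hf, hg]; rw [if_pos h0, if_pos h0]; exact hA
      · by_cases h1 : i.val = 1
        · simp only [hf, hg]; rw [if_neg h0, if_neg h0, if_pos h1, if_pos h1]
          rw [hw2p2]; exact hadj _
        · simp only [hf, hg]; rw [if_neg h0, if_neg h0, if_neg h1, if_neg h1]
          have := hwadj (2 * ((p + i.val - 1) % s) + 1)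
          rwa [show 2 * ((p + i.val - 1) % s) + 1 + 1 = 2 * ((p + i.val - 1) % s) + 2
            by omega] at this
    have hdisfg : ∀ i j : Fin (s+1), i ≠ j →
        f i ≠ f j ∧ f i ≠ g j ∧ g i ≠ f j ∧ g i ≠ g j := by
      intro i j hij
      have hv : i.val ≠ j.val := fun h => hij (Fin.ext h)
      have hi' : i.val < s + 1 := i.isLt
      have hj' : j.val < s + 1 := j.isLt
      by_cases h0 : i.val = 0 <;> by_cases h1 : j.val = 0
      · exact absurd (h0.trans h1.symm) hv
      · by_cases h2 : j.val = 1
        · simp only [hf, hg]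
          rw [if_pos h0, if_pos h0, if_neg h1, if_neg h1, if_pos h2, if_pos h2]
          exact ⟨hxne, hxw _, (hx₀w _).symm, hwne _ _ (hpar _ _ (by omega))⟩
        · have hk := hwkey p ((p + j.val - 1) % s) hp (haval j) (Ne.symm (hanep j h1 h2))
          simp only [hf, hg]
          rw [if_pos h0, if_pos h0, if_neg h1, if_neg h1, if_neg h2, if_neg h2]
          exact ⟨hxw _, hxw _, hk.1.1, hk.1.2⟩
      · by_cases h2 : i.val = 1
        · simp only [hf, hg]
          rw [if_neg h0, if_neg h0, if_pos h1, if_pos h1, if_pos h2, if_pos h2]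
          exact ⟨Ne.symm hxne, hx₀w _, (hxw _).symm, hwne _ _ (hpar _ _ (by omega))⟩
        · have hk := hwkey ((p + i.val - 1) % s) p (haval i) hp (hanep i h0 h2)
          simp only [hf, hg]
          rw [if_neg h0, if_neg h0, if_neg h2, if_neg h2, if_pos h1, if_pos h1]
          exact ⟨(hxw _).symm, hk.1.1, (hxw _).symm, hk.2.1⟩
      · by_cases h2 : i.val = 1 <;> by_cases h3 : j.val = 1
        · exact absurd (h2.trans h3.symm) hv
        · have hk := hwkey p ((p + j.val - 1) % s) hp (haval j) (Ne.symm (hanep j h1 h3))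
          simp only [hf, hg]
          rw [if_neg h0, if_neg h0, if_pos h2, if_pos h2, if_neg h1, if_neg h1,
            if_neg h3, if_neg h3]
          exact ⟨hx₀w _, hx₀w _, hk.2.1, hk.2.2⟩
        · have hk := hwkey ((p + i.val - 1) % s) p (haval i) hp (hanep i h0 h2)
          simp only [hf, hg]
          rw [if_neg h0, if_neg h0, if_neg h2, if_neg h2, if_neg h1, if_neg h1,
            if_pos h3, if_pos h3]
          exact ⟨(hx₀w _).symm, hk.1.2, (hx₀w _).symm, hk.2.2⟩
        · have hne2 : (p + i.val - 1) % s ≠ (p + j.val - 1) % s := by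
            intro hcon
            have e1 : p + i.val - 1 = p + (i.val - 1) := by omega
            have e2 : p + j.val - 1 = p + (j.val - 1) := by omega
            rw [e1, e2] at hcon
            have := hainj _ _ (by omega) (by omega) hcon
            omega
          have hk := hwkey _ _ (haval i) (haval j) hne2
          simp only [hf, hg]
          rw [if_neg h0, if_neg h0, if_neg h2, if_neg h2, if_neg h1, if_neg h1,
            if_neg h3, if_neg h3]
          exact ⟨hk.1.1, hk.1.2, hk.2.1, hk.2.2⟩
    obtain ⟨M, hM1, hM2⟩ := exists_matching_ncard G f g hadjfg hdisfg
    have hle := matching_ncard_le G M hM1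
    rw [hM2, hm] at hle
    omega
  -- every neighbour of x is some u i
  have keyA : ∀ y : V, G.Adj x y → ∃ i : Fin s, y = u i := by
    intro y hAy
    by_cases hy : y ∈ c.support
    · obtain ⟨k, hk1, hk2⟩ := SimpleGraph.Walk.mem_support_iff_exists_getVert.mp hy
      have hyw : y = w k := by
        rw [← hk1]
        show c.getVert k = c.getVert (k % (2 * s))
        rw [hlen] at hk2
        rcases Nat.lt_or_ge k (2 * s) with h | h
        · rw [Nat.mod_eq_of_lt h]
        · have hk3 : k = 2 * s := by omega
          rw [hk3, Nat.mod_self, ← hlen, SimpleGraph.Walk.getVert_length,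
            SimpleGraph.Walk.getVert_zero]
      rcases Nat.even_or_odd (k % (2 * s)) with ⟨i, hi⟩ | ⟨i, hi⟩
      · have his : i < s := by have := hmodlt k; omega
        refine ⟨⟨i, his⟩, ?_⟩
        rw [hu' ⟨i, his⟩, hyw]
        show c.getVert (k % (2 * s)) = c.getVert (2 * i % (2 * s))
        have e : 2 * i % (2 * s) = 2 * i := Nat.mod_eq_of_lt (by omega)
        rw [e, hi]; ring_nf
      · exfalso
        have his : i < s := by have := hmodlt k; omega
        apply key3 i his
        have : w k = w (2 * i + 1) := by
          show c.getVert (k % (2 * s)) = c.getVert ((2 * i + 1) % (2 * s))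
          have e : (2 * i + 1) % (2 * s) = 2 * i + 1 := Nat.mod_eq_of_lt (by omega)
          rw [e, hi]
        rwa [hyw, this] at hAy
    · by_cases hy0 : y = x₀
      · exact absurd (hy0 ▸ hAy) key1
      · exact absurd hAy (key2 y hy hy0)
  -- the degree bound from connectivity
  have huinj : Function.Injective u := by
    intro i j h
    rw [hu' i, hu' j] at h
    have := hwinj _ _ h
    rw [Nat.mod_eq_of_lt (by omega), Nat.mod_eq_of_lt (by omega)] at this
    exact Fin.ext (by omega)
  have hSsub : G.neighborFinset x ⊆ Finset.image u Finset.univ := by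
    intro y hy
    rw [SimpleGraph.mem_neighborFinset] at hy
    obtain ⟨i, rfl⟩ := keyA y hy
    exact Finset.mem_image.mpr ⟨i, Finset.mem_univ _, rfl⟩
  have hks : s ≤ (G.neighborFinset x).card := by
    have hmem : (G.neighborFinset x).card ∈
        {k | ∃ S : Finset V, S.card = k ∧
          (¬ (G.induce ((↑S : Set V)ᶜ)).Connected ∨ Fintype.card V ≤ k + 1)} := by
      refine ⟨G.neighborFinset x, rfl, Or.inl ?_⟩
      intro hcon
      have hxmem : x ∈ ((↑(G.neighborFinset x) : Set V)ᶜ) := by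
        simp only [Set.mem_compl_iff, Finset.coe_sort_coe, Finset.mem_coe,
          SimpleGraph.mem_neighborFinset]
        exact G.irrefl
      have hx₀mem : x₀ ∈ ((↑(G.neighborFinset x) : Set V)ᶜ) := by
        simp only [Set.mem_compl_iff, Finset.mem_coe, SimpleGraph.mem_neighborFinset]
        exact key1
      obtain ⟨pth⟩ := hcon.preconnected ⟨x, hxmem⟩ ⟨x₀, hx₀mem⟩
      have hnotnil : ¬ pth.Nil := by
        intro hnil
        have h := SimpleGraph.Walk.Nil.eq hnil
        exact hxne (congrArg Subtype.val h)
      have hadj1 := SimpleGraph.Walk.adj_snd hnotnil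
      have : G.Adj x ((pth.getVert 1) : V) := hadj1
      have hmem1 := (pth.getVert 1).2
      simp only [Set.mem_compl_iff, Finset.mem_coe, SimpleGraph.mem_neighborFinset] at hmem1
      exact hmem1 this
    have := Nat.sInf_le hmem
    rw [← vertexConnectivity, hκ] at this
    exact this
  have hSeq : G.neighborFinset x = Finset.image u Finset.univ := by
    refine Finset.eq_of_subset_of_card_le hSsub ?_
    rw [Finset.card_image_of_injective _ huinj, Finset.card_univ, Fintype.card_fin]
    exact hks
  intro w' _
  constructor
  · intro hAxw
    have : w' ∈ G.neighborFinset x := (SimpleGraph.mem_neighborFinset G x w').mpr hAxw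
    rw [hSeq] at this
    obtain ⟨i, _, rfl⟩ := Finset.mem_image.mp this
    exact ⟨i, rfl⟩
  · rintro ⟨i, rfl⟩
    have : u i ∈ Finset.image u Finset.univ :=
      Finset.mem_image.mpr ⟨i, Finset.mem_univ _, rfl⟩
    rw [← hSeq] at this
    exact (SimpleGraph.mem_neighborFinset G x (u i)).mp this
end

section
/- Let G be a non-Hamiltonian graph with κ(G) = m(G) = s ≥ 2 and longest cycle C = u₁u₁⁺u₂u₂⁺⋯uₛuₛ⁺u₁ with x₀ outside C adjacent to all uᵢ. Then uᵢ⁺uⱼ ∈ E(G) for all i, j with 1 ≤ i, j ≤ s; that is, {u₁,...,uₛ} ∪ {u₁⁺,...,uₛ⁺} induces a subgraph containing the complete bipartite graph K_{s,s} between the uᵢ's and the uᵢ⁺'s. -/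
open SimpleGraph Finset

section AuxLemmas

variable {V : Type*} {G : SimpleGraph V}

private lemma aux_support_get {a b : V} (p : G.Walk a b) (i : ℕ) (h : i < p.support.length) :
    p.support.get ⟨i, h⟩ = p.getVert i := by
  induction p generalizing i with
  | nil =>
    simp only [Walk.support_nil, List.length_singleton] at h
    interval_cases i
    rfl
  | cons hadj q ih =>
    cases i with
    | zero => rfl
    | succ i =>
      simp only [Walk.support_cons, List.get_cons_succ, Walk.getVert_cons_succ]
      exact ih i _

private lemma aux_getVert_injOn_cycle {v : V} {c : G.Walk v v} (hc : c.IsCycle) :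
    ∀ a < c.length, ∀ b < c.length, c.getVert a = c.getVert b → a = b := by
  have hnodup : c.support.tail.Nodup := hc.2
  have hlen : c.support.length = c.length + 1 := Walk.length_support c
  have key : ∀ a, 0 < a → a ≤ c.length → ∀ b, 0 < b → b ≤ c.length →
      c.getVert a = c.getVert b → a = b := by
    intro a ha ha' b hb hb' heq
    have h1 : a - 1 < c.support.tail.length := by
      simp [List.length_tail, hlen]; omega
    have h2 : b - 1 < c.support.tail.length := by
      simp [List.length_tail, hlen]; omega
    have e1 : c.support.tail.get ⟨a - 1, h1⟩ = c.getVert a := by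
      rw [List.get_tail]
      rw [aux_support_get]
      congr 1; omega
    have e2 : c.support.tail.get ⟨b - 1, h2⟩ = c.getVert b := by
      rw [List.get_tail]
      rw [aux_support_get]
      congr 1; omega
    have := (List.Nodup.get_inj_iff hnodup (i := ⟨a-1,h1⟩) (j := ⟨b-1,h2⟩)).mp (by
      rw [e1, e2]; exact heq)
    have := Fin.mk.injEq .. ▸ this
    omega
  intro a ha b hb heq
  rcases Nat.eq_zero_or_pos a with rfl | hapos
  · rcases Nat.eq_zero_or_pos b with rfl | hbpos
    · rfl
    · exfalso
      have : c.getVert c.length = c.getVert b := by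
        rw [Walk.getVert_length]; rw [Walk.getVert_zero] at heq; exact heq
      have := key c.length (by omega) le_rfl b hbpos (le_of_lt hb) this
      omega
  · rcases Nat.eq_zero_or_pos b with rfl | hbpos
    · exfalso
      have : c.getVert a = c.getVert c.length := by
        rw [Walk.getVert_length]; rw [Walk.getVert_zero] at heq; exact heq
      have := key a hapos (le_of_lt ha) c.length (by omega) le_rfl this
      omega
    · exact key a hapos (le_of_lt ha) b hbpos (le_of_lt hb) heq

private lemma aux_adj_getVert_mod {v : V} (c : G.Walk v v) (h0 : c.length ≠ 0) (q : ℕ) :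
    G.Adj (c.getVert (q % c.length)) (c.getVert ((q + 1) % c.length)) := by
  have hq : q % c.length < c.length := Nat.mod_lt _ (by omega)
  have emod : (q + 1) % c.length = (q % c.length + 1) % c.length := by
    rw [Nat.mod_add_mod]
  rcases Nat.lt_or_ge (q % c.length + 1) c.length with h | h
  · have : (q + 1) % c.length = q % c.length + 1 := by
      rw [emod, Nat.mod_eq_of_lt h]
    rw [this]
    exact c.adj_getVert_succ hq
  · have h1 : q % c.length = c.length - 1 := by omega
    have h2 : (q + 1) % c.length = 0 := by
      rw [emod, h1]
      have : c.length - 1 + 1 = c.length := by omega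
      rw [this, Nat.mod_self]
    rw [h1, h2, Walk.getVert_zero]
    have := c.adj_getVert_succ (i := c.length - 1) (by omega)
    have h3 : c.length - 1 + 1 = c.length := by omega
    rw [h3, Walk.getVert_length] at this
    exact this

private lemma aux_path_of_fn (f : ℕ → V) (m : ℕ)
    (hinj : ∀ a ≤ m, ∀ b ≤ m, f a = f b → a = b)
    (hadj : ∀ i, i < m → G.Adj (f i) (f (i + 1))) :
    ∃ p : G.Walk (f m) (f 0), p.IsPath ∧ p.length = m ∧
      (∀ y, y ∈ p.support ↔ ∃ t ≤ m, f t = y) ∧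
      (∀ e ∈ p.edges, ∃ t < m, e = s(f (t + 1), f t)) := by
  induction m with
  | zero =>
    exact ⟨Walk.nil, Walk.IsPath.nil, rfl, by simp +contextual [eq_comm], by simp⟩
  | succ m ih =>
    obtain ⟨p, hp, hl, hsup, hedge⟩ := ih
      (fun a ha b hb h => hinj a (by omega) b (by omega) h)
      (fun i hi => hadj i (by omega))
    refine ⟨Walk.cons ((hadj m (by omega)).symm) p, ?_, by simp [hl], ?_, ?_⟩
    · rw [Walk.cons_isPath_iff]
      refine ⟨hp, fun hmem => ?_⟩
      obtain ⟨t, ht, hft⟩ := (hsup _).mp hmem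
      have := hinj (m + 1) le_rfl t (by omega) hft.symm
      omega
    · intro y
      simp only [Walk.support_cons, List.mem_cons]
      constructor
      · rintro (rfl | hy)
        · exact ⟨m + 1, le_rfl, rfl⟩
        · obtain ⟨t, ht, hft⟩ := (hsup y).mp hy
          exact ⟨t, by omega, hft⟩
      · rintro ⟨t, ht, rfl⟩
        rcases Nat.lt_or_ge t (m + 1) with h | h
        · exact Or.inr ((hsup _).mpr ⟨t, by omega, rfl⟩)
        · left
          congr 1
          omega
    · intro e he
      simp only [Walk.edges_cons, List.mem_cons] at he
      rcases he with rfl | he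
      · exact ⟨m, by omega, rfl⟩
      · obtain ⟨t, ht, rfl⟩ := hedge e he
        exact ⟨t, by omega, rfl⟩

private lemma aux_exists_cycle_of_fn {n : ℕ} (hn : 3 ≤ n) (f : ℕ → V)
    (hinj : ∀ a ≤ n - 1, ∀ b ≤ n - 1, f a = f b → a = b)
    (hadj : ∀ i, i + 1 ≤ n - 1 → G.Adj (f i) (f (i + 1)))
    (hlast : G.Adj (f (n - 1)) (f 0)) :
    ∃ (w : V) (e : G.Walk w w), e.IsCycle ∧ e.length = n := by
  obtain ⟨p, hp, hl, hsup, hedge⟩ := aux_path_of_fn (G := G) f (n - 1) hinj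
    (fun i hi => hadj i (by omega))
  refine ⟨f (n - 1), Walk.cons hlast p.reverse, ?_, ?_⟩
  · rw [Walk.cons_isCycle_iff]
    refine ⟨hp.reverse, fun hmem => ?_⟩
    rw [Walk.edges_reverse, List.mem_reverse] at hmem
    obtain ⟨t, ht, het⟩ := hedge _ hmem
    rw [Sym2.eq_iff] at het
    rcases het with ⟨h1, h2⟩ | ⟨h1, h2⟩
    · have e1 := hinj (n - 1) le_rfl (t + 1) (by omega) h1
      have e2 := hinj 0 (by omega) t (by omega) h2
      omega
    · have e1 := hinj (n - 1) le_rfl t (by omega) h1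
      omega
  · simp [hl]
    omega

private lemma aux_matching_of_pairs {k : ℕ} (e₁ e₂ : Fin k → V)
    (hadj : ∀ i, G.Adj (e₁ i) (e₂ i))
    (hinj : Function.Injective (Sum.elim e₁ e₂ : Fin k ⊕ Fin k → V)) :
    ∃ M : G.Subgraph, M.IsMatching ∧ M.edgeSet.ncard = k := by
  have h1 : Function.Injective e₁ := fun a b h => by
    have := hinj (a₁ := Sum.inl a) (a₂ := Sum.inl b) (by simpa using h); simpa using this
  have h2 : Function.Injective e₂ := fun a b h => by
    have := hinj (a₁ := Sum.inr a) (a₂ := Sum.inr b) (by simpa using h); simpa using this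
  have h12 : ∀ i j, e₁ i ≠ e₂ j := fun i j h => by
    have := hinj (a₁ := Sum.inl i) (a₂ := Sum.inr j) (by simpa using h); simp at this
  let M : G.Subgraph := {
    verts := Set.range e₁ ∪ Set.range e₂
    Adj := fun x y => ∃ i, (x = e₁ i ∧ y = e₂ i) ∨ (x = e₂ i ∧ y = e₁ i)
    adj_sub := by rintro x y ⟨i, ⟨rfl, rfl⟩ | ⟨rfl, rfl⟩⟩
                  · exact hadj i
                  · exact (hadj i).symm
    edge_vert := by rintro x y ⟨i, ⟨rfl, rfl⟩ | ⟨rfl, rfl⟩⟩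
                    · exact Or.inl ⟨i, rfl⟩
                    · exact Or.inr ⟨i, rfl⟩
    symm := by refine ⟨?_⟩; rintro x y ⟨i, ⟨rfl, rfl⟩ | ⟨rfl, rfl⟩⟩
               · exact ⟨i, Or.inr ⟨rfl, rfl⟩⟩
               · exact ⟨i, Or.inl ⟨rfl, rfl⟩⟩ }
  have hMAdj : ∀ x y, M.Adj x y ↔
      ∃ i, (x = e₁ i ∧ y = e₂ i) ∨ (x = e₂ i ∧ y = e₁ i) := fun _ _ => Iff.rfl
  have hMv : M.verts = Set.range e₁ ∪ Set.range e₂ := rfl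
  refine ⟨M, ?_, ?_⟩
  · intro v hv
    rw [hMv] at hv
    rcases hv with ⟨i, rfl⟩ | ⟨i, rfl⟩
    · refine ⟨e₂ i, (hMAdj _ _).mpr ⟨i, Or.inl ⟨rfl, rfl⟩⟩, ?_⟩
      intro y hy
      rcases (hMAdj _ _).mp hy with ⟨j, ⟨hj1, rfl⟩ | ⟨hj1, rfl⟩⟩
      · rw [h1 hj1]
      · exact absurd hj1 (h12 i j)
    · refine ⟨e₁ i, (hMAdj _ _).mpr ⟨i, Or.inr ⟨rfl, rfl⟩⟩, ?_⟩
      intro y hy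
      rcases (hMAdj _ _).mp hy with ⟨j, ⟨hj1, rfl⟩ | ⟨hj1, rfl⟩⟩
      · exact absurd hj1.symm (h12 j i)
      · rw [h2 hj1]
  · have hrange : M.edgeSet = Set.range (fun i => s(e₁ i, e₂ i)) := by
      ext e
      induction e with
      | _ x y =>
        rw [Subgraph.mem_edgeSet, hMAdj]
        simp only [Set.mem_range]
        constructor
        · rintro ⟨i, ⟨rfl, rfl⟩ | ⟨rfl, rfl⟩⟩
          · exact ⟨i, rfl⟩
          · exact ⟨i, Sym2.eq_swap⟩
        · rintro ⟨i, hi⟩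
          rw [Sym2.eq_iff] at hi
          rcases hi with ⟨rfl, rfl⟩ | ⟨rfl, rfl⟩
          · exact ⟨i, Or.inl ⟨rfl, rfl⟩⟩
          · exact ⟨i, Or.inr ⟨rfl, rfl⟩⟩
    rw [hrange]
    have hinjf : Function.Injective (fun i => s(e₁ i, e₂ i)) := by
      intro a b h
      simp only [Sym2.eq_iff] at h
      rcases h with ⟨ha, _⟩ | ⟨ha, _⟩
      · exact h1 ha
      · exact absurd ha (h12 a b)
    rw [← Set.image_univ, Set.ncard_image_of_injective _ hinjf, Set.ncard_univ,
      Nat.card_eq_fintype_card, Fintype.card_fin]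

private lemma aux_mod_cases2 {n x y : ℕ} (hn : 0 < n) (hx : x < 2 * n) (hy : y < 2 * n)
    (h : x % n = y % n) : x = y ∨ x = y + n ∨ y = x + n := by
  have dx := Nat.div_add_mod x n
  have dy := Nat.div_add_mod y n
  have qx : x / n < 2 := by
    rw [Nat.div_lt_iff_lt_mul hn]; omega
  have qy : y / n < 2 := by
    rw [Nat.div_lt_iff_lt_mul hn]; omega
  interval_cases hqx : x / n <;> interval_cases hqy : y / n <;> omega

end AuxLemmas

/-- `uᵢ⁺ uⱼ ∈ E(G)` for all `i, j`: the `uᵢ`'s and the `uᵢ⁺`'s induce a subgraph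
containing the complete bipartite graph `K_{s,s}`. -/
theorem stmt_6 {V : Type*} [Fintype V] [DecidableEq V] (G : SimpleGraph V)
    (hnotham : ¬ G.IsHamiltonian)
    (s : ℕ) (hs : 2 ≤ s)
    (hκ : vertexConnectivity G = s) (hm : matchingNumber G = s)
    {v : V} (c : G.Walk v v) (hc : c.IsCycle)
    (hlong : ∀ (w : V) (d : G.Walk w w), d.IsCycle → d.length ≤ c.length)
    (hlen : c.length = 2 * s)
    (u usucc : Fin s → V)
    (hu : ∀ i : Fin s, c.getVert (2 * ↑i) = u i)
    (husucc : ∀ i : Fin s, c.getVert (2 * ↑i + 1) = usucc i)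
    (x₀ : V) (hx₀ : x₀ ∉ c.support)
    (hadj : ∀ i, G.Adj x₀ (u i)) :
    ∀ i j : Fin s, G.Adj (usucc i) (u j) := by
  intro i j
  by_contra hnadj
  have hs0 : 0 < s := by omega
  have hn0 : 0 < 2 * s := by omega
  -- the cyclic vertex function
  set cg : ℕ → V := fun q => c.getVert (q % (2 * s)) with hcg
  have hginj : ∀ a < 2 * s, ∀ b < 2 * s, c.getVert a = c.getVert b → a = b := by
    have := aux_getVert_injOn_cycle hc; rw [hlen] at this; exact this
  have cg_adj : ∀ q, G.Adj (cg q) (cg (q + 1)) := by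
    intro q
    have := aux_adj_getVert_mod c (by omega) q
    rw [hlen] at this
    exact this
  have cg_inj : ∀ a b, cg a = cg b → a % (2 * s) = b % (2 * s) := by
    intro a b h
    exact hginj _ (Nat.mod_lt _ hn0) _ (Nat.mod_lt _ hn0) h
  have cg_mem : ∀ q, cg q ∈ c.support := by
    intro q
    rw [Walk.mem_support_iff_exists_getVert]
    exact ⟨q % (2 * s), rfl, by rw [hlen]; exact le_of_lt (Nat.mod_lt _ hn0)⟩
  have cg_per : ∀ q, cg (q + 2 * s) = cg q := by
    intro q
    simp only [hcg]
    congr 1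
    exact Nat.add_mod_right q (2 * s)
  have cg_u : ∀ (m : ℕ) (k : Fin s), m % s = (k : ℕ) → cg (2 * m) = u k := by
    intro m k hk
    have h1 : (2 * m) % (2 * s) = 2 * (k : ℕ) := by rw [Nat.mul_mod_mul_left, hk]
    simp only [hcg]
    rw [h1]
    exact hu k
  have cg_usucc : ∀ (m : ℕ) (k : Fin s), m % s = (k : ℕ) → cg (2 * m + 1) = usucc k := by
    intro m k hk
    have h2 : 2 * (m % s) + 1 ≡ 2 * m + 1 [MOD 2 * s] :=
      ((Nat.mod_modEq m s).mul_left' 2).add_right 1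
    have h3 : (2 * m + 1) % (2 * s) = 2 * (k : ℕ) + 1 := by
      have hlt : 2 * (m % s) + 1 < 2 * s := by
        have := Nat.mod_lt m hs0; omega
      have := h2.symm
      unfold Nat.ModEq at this
      rw [this, Nat.mod_eq_of_lt hlt, hk]
    simp only [hcg]
    rw [h3]
    exact husucc k
  have cgu : ∀ k : Fin s, cg (2 * (k : ℕ)) = u k :=
    fun k => cg_u _ k (Nat.mod_eq_of_lt k.isLt)
  have cgus : ∀ k : Fin s, cg (2 * (k : ℕ) + 1) = usucc k :=
    fun k => cg_usucc _ k (Nat.mod_eq_of_lt k.isLt)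
  have hx0cg : ∀ q, x₀ ≠ cg q := fun q h => hx₀ (h ▸ cg_mem q)
  -- parity and injectivity helpers
  have hoe : ∀ a b : ℕ, a < 2 * s → b < 2 * s → cg (2 * a + 1) ≠ cg (2 * b) := by
    intro a b ha hb h
    have := cg_inj _ _ h
    have := aux_mod_cases2 hn0 (by omega) (by omega) this
    omega
  have hoo : ∀ a b : ℕ, a < 2 * s → b < 2 * s → cg (2 * a + 1) = cg (2 * b + 1) →
      a % s = b % s := by
    intro a b ha hb h
    have := cg_inj _ _ h
    have h2 := aux_mod_cases2 hn0 (by omega) (by omega) this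
    have h3 : a = b ∨ a = b + s ∨ b = a + s := by omega
    rcases h3 with rfl | rfl | rfl
    · rfl
    · simp [Nat.add_mod_right]
    · simp [Nat.add_mod_right]
  have hee : ∀ a b : ℕ, a < 2 * s → b < 2 * s → cg (2 * a) = cg (2 * b) →
      a % s = b % s := by
    intro a b ha hb h
    have := cg_inj _ _ h
    have h2 := aux_mod_cases2 hn0 (by omega) (by omega) this
    have h3 : a = b ∨ a = b + s ∨ b = a + s := by omega
    rcases h3 with rfl | rfl | rfl
    · rfl
    · simp [Nat.add_mod_right]
    · simp [Nat.add_mod_right]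
  have hmodc : ∀ x y : ℕ, x < 2 * s → y < 2 * s → x % s = y % s →
      (x = y ∨ x = y + s ∨ y = x + s) := by
    intro x y hx hy h
    exact aux_mod_cases2 hs0 hx hy h
  -- Step A: x₀ is not adjacent to any usucc t
  have hA : ∀ t : Fin s, ¬ G.Adj x₀ (usucc t) := by
    intro t hx
    have htlt : (t : ℕ) < s := t.isLt
    have key : ∃ (w' : V) (e : G.Walk w' w'), e.IsCycle ∧ e.length = 2 * s + 1 := by
      apply aux_exists_cycle_of_fn (n := 2 * s + 1) (by omega)
        (f := fun m => if m = 0 then x₀ else cg (2 * (t : ℕ) + m))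
      · intro a ha b hb hfe
        by_cases ha0 : a = 0 <;> by_cases hb0 : b = 0
        · omega
        · exfalso
          rw [if_pos ha0, if_neg hb0] at hfe
          exact hx0cg _ hfe
        · exfalso
          rw [if_neg ha0, if_pos hb0] at hfe
          exact hx0cg _ hfe.symm
        · rw [if_neg ha0, if_neg hb0] at hfe
          have := cg_inj _ _ hfe
          have := aux_mod_cases2 hn0 (by omega) (by omega) this
          omega
      · intro m hm
        rw [if_neg (show ¬(m + 1 = 0) by omega)]
        by_cases h0 : m = 0
        · subst h0
          rw [if_pos rfl]
          rw [show 2 * (t : ℕ) + 1 = 2 * (t : ℕ) + 1 from rfl, cgus t]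
          exact hx
        · rw [if_neg h0]
          rw [show 2 * (t : ℕ) + (m + 1) = (2 * (t : ℕ) + m) + 1 by ring]
          exact cg_adj _
      · rw [if_neg (show ¬(2 * s + 1 - 1 = 0) by omega), if_pos rfl]
        rw [show 2 * (t : ℕ) + (2 * s + 1 - 1) = 2 * (t : ℕ) + 2 * s by omega]
        rw [cg_per, cgu t]
        exact (hadj t).symm
    obtain ⟨w', e, he, helen⟩ := key
    have := hlong w' e he
    omega
  -- Step B: usucc t is not adjacent to usucc r for t ≠ r
  have hB : ∀ t r : Fin s, (t : ℕ) < (r : ℕ) → ¬ G.Adj (usucc t) (usucc r) := by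
    intro t r htr hts
    have htlt : (t : ℕ) < s := t.isLt
    have hrlt : (r : ℕ) < s := r.isLt
    have hd2 : 2 ≤ 2 * ((r : ℕ) - (t : ℕ)) := by omega
    have key : ∃ (w' : V) (e : G.Walk w' w'), e.IsCycle ∧ e.length = 2 * s + 1 := by
      apply aux_exists_cycle_of_fn (n := 2 * s + 1) (by omega)
        (f := fun m => if m = 0 then x₀
          else if m ≤ 2 * ((r : ℕ) - (t : ℕ)) then cg (2 * (t : ℕ) + 1 + m)
          else cg (2 * (t : ℕ) + 1 + 2 * ((r : ℕ) - (t : ℕ)) + 1 + 2 * s - m))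
      · intro a ha b hb hfe
        by_cases ha0 : a = 0 <;> by_cases hb0 : b = 0
        · omega
        · exfalso
          rw [if_pos ha0, if_neg hb0] at hfe
          split_ifs at hfe <;> exact hx0cg _ hfe
        · exfalso
          rw [if_neg ha0, if_pos hb0] at hfe
          split_ifs at hfe <;> exact hx0cg _ hfe.symm
        · rw [if_neg ha0, if_neg hb0] at hfe
          by_cases had : a ≤ 2 * ((r : ℕ) - (t : ℕ)) <;>
            by_cases hbd : b ≤ 2 * ((r : ℕ) - (t : ℕ))
          · rw [if_pos had, if_pos hbd] at hfe
            have := cg_inj _ _ hfe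
            have := aux_mod_cases2 hn0 (by omega) (by omega) this
            omega
          · rw [if_pos had, if_neg hbd] at hfe
            have := cg_inj _ _ hfe
            have := aux_mod_cases2 hn0 (by omega) (by omega) this
            omega
          · rw [if_neg had, if_pos hbd] at hfe
            have := cg_inj _ _ hfe
            have := aux_mod_cases2 hn0 (by omega) (by omega) this
            omega
          · rw [if_neg had, if_neg hbd] at hfe
            have := cg_inj _ _ hfe
            have := aux_mod_cases2 hn0 (by omega) (by omega) this
            omega
      · intro m hm
        have hm' : m + 1 ≤ 2 * s := by omega
        rw [if_neg (show ¬(m + 1 = 0) by omega)]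
        by_cases h0 : m = 0
        · subst h0
          rw [if_pos rfl, if_pos (by omega)]
          rw [show 2 * (t : ℕ) + 1 + 1 = 2 * ((t : ℕ) + 1) by ring]
          rw [cg_u ((t : ℕ) + 1) ⟨((t : ℕ) + 1) % s, Nat.mod_lt _ hs0⟩ rfl]
          exact hadj _
        · rw [if_neg h0]
          by_cases hmd : m ≤ 2 * ((r : ℕ) - (t : ℕ))
          · by_cases hmd1 : m + 1 ≤ 2 * ((r : ℕ) - (t : ℕ))
            · rw [if_pos hmd, if_pos hmd1]
              rw [show 2 * (t : ℕ) + 1 + (m + 1) = (2 * (t : ℕ) + 1 + m) + 1 by ring]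
              exact cg_adj _
            · rw [if_pos hmd, if_neg hmd1]
              have hme : m = 2 * ((r : ℕ) - (t : ℕ)) := by omega
              rw [show 2 * (t : ℕ) + 1 + m = 2 * (r : ℕ) + 1 by omega]
              rw [show 2 * (t : ℕ) + 1 + 2 * ((r : ℕ) - (t : ℕ)) + 1 + 2 * s - (m + 1)
                    = (2 * (t : ℕ) + 1) + 2 * s by omega]
              rw [cg_per, cgus t, cgus r]
              exact hts.symm
          · rw [if_neg hmd, if_neg (show ¬(m + 1 ≤ 2 * ((r : ℕ) - (t : ℕ))) by omega)]
            rw [show 2 * (t : ℕ) + 1 + 2 * ((r : ℕ) - (t : ℕ)) + 1 + 2 * s - m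
                  = (2 * (t : ℕ) + 1 + 2 * ((r : ℕ) - (t : ℕ)) + 1 + 2 * s - (m + 1)) + 1
                by omega]
            exact (cg_adj _).symm
      · rw [if_neg (show ¬(2 * s + 1 - 1 = 0) by omega),
          if_neg (show ¬(2 * s + 1 - 1 ≤ 2 * ((r : ℕ) - (t : ℕ))) by omega), if_pos rfl]
        rw [show 2 * (t : ℕ) + 1 + 2 * ((r : ℕ) - (t : ℕ)) + 1 + 2 * s - (2 * s + 1 - 1)
              = 2 * ((r : ℕ) + 1) by omega]
        rw [cg_u ((r : ℕ) + 1) ⟨((r : ℕ) + 1) % s, Nat.mod_lt _ hs0⟩ rfl]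
        exact (hadj _).symm
    obtain ⟨w', e, he, helen⟩ := key
    have := hlong w' e he
    omega
  have hBsym : ∀ t r : Fin s, t ≠ r → ¬ G.Adj (usucc t) (usucc r) := by
    intro t r htr h
    rcases Nat.lt_or_ge (t : ℕ) (r : ℕ) with hlt | hge
    · exact hB t r hlt h
    · have : (r : ℕ) < (t : ℕ) := by
        rcases Nat.lt_or_ge (r : ℕ) (t : ℕ) with h' | h'
        · exact h'
        · exact absurd (Fin.ext (by omega)) htr
      exact hB r t this h.symm
  -- Step C: no vertex outside the cycle other than x₀ is adjacent to any usucc t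
  have hC : ∀ t : Fin s, ∀ wv : V, wv ∉ c.support → wv ≠ x₀ → ¬ G.Adj wv (usucc t) := by
    intro t wv hwv hwx hW
    have htlt : (t : ℕ) < s := t.isLt
    have hwcg : ∀ q, wv ≠ cg q := fun q h => hwv (h ▸ cg_mem q)
    have key := aux_matching_of_pairs (G := G) (k := s + 1)
      (e₁ := fun p => if (p : ℕ) = 0 then x₀ else if (p : ℕ) = 1 then wv
        else cg (2 * ((t : ℕ) + (p : ℕ) - 1) + 1))
      (e₂ := fun p => if (p : ℕ) = 0 then cg (2 * ((t : ℕ) + 1))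
        else if (p : ℕ) = 1 then cg (2 * (t : ℕ) + 1) else cg (2 * ((t : ℕ) + (p : ℕ))))
      ?_ ?_
    · obtain ⟨M, hM, hMc⟩ := key
      have hmemM : (s + 1) ∈ {n | ∃ M : G.Subgraph, M.IsMatching ∧ M.edgeSet.ncard = n} :=
        ⟨M, hM, hMc⟩
      have hbdd : BddAbove {n | ∃ M : G.Subgraph, M.IsMatching ∧ M.edgeSet.ncard = n} := by
        refine ⟨(Set.univ : Set (Sym2 V)).ncard, ?_⟩
        rintro nn ⟨M', _, rfl⟩
        exact Set.ncard_le_ncard (Set.subset_univ _) Set.finite_univ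
      have hle : s + 1 ≤ matchingNumber G := le_csSup hbdd hmemM
      rw [hm] at hle
      omega
    · -- adjacency of the pairs
      intro p
      have hplt : (p : ℕ) < s + 1 := p.isLt
      by_cases hp0 : (p : ℕ) = 0
      · rw [if_pos hp0, if_pos hp0]
        rw [cg_u ((t : ℕ) + 1) ⟨((t : ℕ) + 1) % s, Nat.mod_lt _ hs0⟩ rfl]
        exact hadj _
      · by_cases hp1 : (p : ℕ) = 1
        · rw [if_neg hp0, if_pos hp1, if_neg hp0, if_pos hp1]
          rw [cgus t]
          exact hW
        · rw [if_neg hp0, if_neg hp1, if_neg hp0, if_neg hp1]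
          rw [show 2 * ((t : ℕ) + (p : ℕ)) = (2 * ((t : ℕ) + (p : ℕ) - 1) + 1) + 1 by omega]
          exact cg_adj _
    · -- injectivity of all endpoints
      intro z1 z2 hz
      have hclass : ∀ p : Fin (s + 1), (p : ℕ) = 0 ∨ (p : ℕ) = 1 ∨
          (2 ≤ (p : ℕ) ∧ (p : ℕ) ≤ s) := by
        intro p
        have := p.isLt
        omega
      rcases z1 with p | p <;> rcases z2 with q | q <;>
        simp only [Sum.elim_inl, Sum.elim_inr] at hz
      · -- e₁ p = e₁ q
        rcases hclass p with hp | hp | hp <;> rcases hclass q with hq | hq | hq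
        · exact congrArg Sum.inl (Fin.ext (by omega))
        · rw [if_pos hp, if_neg (by omega), if_pos hq] at hz
          exact absurd hz.symm hwx
        · rw [if_pos hp, if_neg (by omega), if_neg (by omega)] at hz
          exact absurd hz (hx0cg _)
        · rw [if_neg (by omega), if_pos hp, if_pos hq] at hz
          exact absurd hz hwx
        · exact congrArg Sum.inl (Fin.ext (by omega))
        · rw [if_neg (by omega), if_pos hp, if_neg (by omega), if_neg (by omega)] at hz
          exact absurd hz (hwcg _)
        · rw [if_neg (by omega), if_neg (by omega), if_pos hq] at hz
          exact absurd hz.symm (hx0cg _)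
        · rw [if_neg (by omega), if_neg (by omega), if_neg (by omega), if_pos hq] at hz
          exact absurd hz.symm (hwcg _)
        · rw [if_neg (by omega), if_neg (by omega), if_neg (by omega), if_neg (by omega)] at hz
          have := hoo _ _ (by omega) (by omega) hz
          have := hmodc _ _ (by omega) (by omega) this
          exact congrArg Sum.inl (Fin.ext (by omega))
      · -- e₁ p = e₂ q
        exfalso
        rcases hclass p with hp | hp | hp <;> rcases hclass q with hq | hq | hq
        · rw [if_pos hp, if_pos hq] at hz
          exact hx0cg _ hz
        · rw [if_pos hp, if_neg (by omega), if_pos hq] at hz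
          exact hx0cg _ hz
        · rw [if_pos hp, if_neg (by omega), if_neg (by omega)] at hz
          exact hx0cg _ hz
        · rw [if_neg (by omega), if_pos hp, if_pos hq] at hz
          exact hwcg _ hz
        · rw [if_neg (by omega), if_pos hp, if_neg (by omega), if_pos hq] at hz
          exact hwcg _ hz
        · rw [if_neg (by omega), if_pos hp, if_neg (by omega), if_neg (by omega)] at hz
          exact hwcg _ hz
        · rw [if_neg (by omega), if_neg (by omega), if_pos hq] at hz
          exact hoe _ _ (by omega) (by omega) hz
        · rw [if_neg (by omega), if_neg (by omega), if_neg (by omega), if_pos hq] at hz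
          have := hoo _ _ (by omega) (by omega) hz
          have := hmodc _ _ (by omega) (by omega) this
          omega
        · rw [if_neg (by omega), if_neg (by omega), if_neg (by omega), if_neg (by omega)] at hz
          exact hoe _ _ (by omega) (by omega) hz
      · -- e₂ p = e₁ q
        exfalso
        rcases hclass p with hp | hp | hp <;> rcases hclass q with hq | hq | hq
        · rw [if_pos hp, if_pos hq] at hz
          exact hx0cg _ hz.symm
        · rw [if_pos hp, if_neg (by omega), if_pos hq] at hz
          exact hwcg _ hz.symm
        · rw [if_pos hp, if_neg (by omega), if_neg (by omega)] at hz
          exact hoe _ _ (by omega) (by omega) hz.symm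
        · rw [if_neg (by omega), if_pos hp, if_pos hq] at hz
          exact hx0cg _ hz.symm
        · rw [if_neg (by omega), if_pos hp, if_neg (by omega), if_pos hq] at hz
          exact hwcg _ hz.symm
        · rw [if_neg (by omega), if_pos hp, if_neg (by omega), if_neg (by omega)] at hz
          have := hoo _ _ (by omega) (by omega) hz.symm
          have := hmodc _ _ (by omega) (by omega) this
          omega
        · rw [if_neg (by omega), if_neg (by omega), if_pos hq] at hz
          exact hx0cg _ hz.symm
        · rw [if_neg (by omega), if_neg (by omega), if_neg (by omega), if_pos hq] at hz
          exact hwcg _ hz.symm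
        · rw [if_neg (by omega), if_neg (by omega), if_neg (by omega), if_neg (by omega)] at hz
          exact hoe _ _ (by omega) (by omega) hz.symm
      · -- e₂ p = e₂ q
        rcases hclass p with hp | hp | hp <;> rcases hclass q with hq | hq | hq
        · exact congrArg Sum.inr (Fin.ext (by omega))
        · exfalso
          rw [if_pos hp, if_neg (by omega), if_pos hq] at hz
          exact hoe _ _ (by omega) (by omega) hz.symm
        · rw [if_pos hp, if_neg (by omega), if_neg (by omega)] at hz
          have := hee _ _ (by omega) (by omega) hz
          have := hmodc _ _ (by omega) (by omega) this
          exact congrArg Sum.inr (Fin.ext (by omega))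
        · exfalso
          rw [if_neg (by omega), if_pos hp, if_pos hq] at hz
          exact hoe _ _ (by omega) (by omega) hz
        · exact congrArg Sum.inr (Fin.ext (by omega))
        · exfalso
          rw [if_neg (by omega), if_pos hp, if_neg (by omega), if_neg (by omega)] at hz
          exact hoe _ _ (by omega) (by omega) hz
        · rw [if_neg (by omega), if_neg (by omega), if_pos hq] at hz
          have := hee _ _ (by omega) (by omega) hz
          have := hmodc _ _ (by omega) (by omega) this
          exact congrArg Sum.inr (Fin.ext (by omega))
        · exfalso
          rw [if_neg (by omega), if_neg (by omega), if_neg (by omega), if_pos hq] at hz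
          exact hoe _ _ (by omega) (by omega) hz.symm
        · rw [if_neg (by omega), if_neg (by omega), if_neg (by omega), if_neg (by omega)] at hz
          have := hee _ _ (by omega) (by omega) hz
          have := hmodc _ _ (by omega) (by omega) this
          exact congrArg Sum.inr (Fin.ext (by omega))
  -- neighbors of usucc i are all among the u k
  have hnbr : ∀ y : V, G.Adj (usucc i) y → ∃ k : Fin s, y = u k := by
    intro y hy
    by_cases hys : y ∈ c.support
    · obtain ⟨q, hq, hql⟩ := Walk.mem_support_iff_exists_getVert.mp hys
      have hyq : y = cg q := by
        rcases Nat.lt_or_ge q (2 * s) with h | h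
        · simp only [hcg]
          rw [Nat.mod_eq_of_lt h, hq]
        · have hq2 : q = 2 * s := by rw [hlen] at hql; omega
          subst hq2
          simp only [hcg]
          rw [Nat.mod_self]
          rw [← hq, Walk.getVert_zero]
          have := c.getVert_length
          rw [hlen] at this
          rw [this]
      have hmod : q % (2 * s) < 2 * s := Nat.mod_lt _ hn0
      have hyq2 : y = cg (q % (2 * s)) := by
        rw [hyq]; simp only [hcg]; rw [Nat.mod_mod_of_dvd _ dvd_rfl]
      rcases Nat.even_or_odd (q % (2 * s)) with ⟨m, hm⟩ | ⟨m, hm⟩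
      · refine ⟨⟨m % s, Nat.mod_lt _ hs0⟩, ?_⟩
        rw [hyq2, hm, show m + m = 2 * m by ring, cg_u m ⟨m % s, Nat.mod_lt _ hs0⟩ rfl]
      · exfalso
        have hyus : y = usucc ⟨m % s, Nat.mod_lt _ hs0⟩ := by
          rw [hyq2, hm, cg_usucc m ⟨m % s, Nat.mod_lt _ hs0⟩ rfl]
        by_cases hki : (⟨m % s, Nat.mod_lt _ hs0⟩ : Fin s) = i
        · rw [hyus, hki] at hy
          exact G.irrefl hy
        · rw [hyus] at hy
          exact hBsym i _ (fun h => hki h.symm) hy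
    · exfalso
      by_cases hyx : y = x₀
      · subst hyx
        exact hA i hy.symm
      · exact hC i y hys hyx hy.symm
  -- the separating set
  have huinj : Function.Injective u := by
    intro k1 k2 h
    have h1 : cg (2 * (k1 : ℕ)) = cg (2 * (k2 : ℕ)) := by rw [cgu k1, cgu k2, h]
    have := hee _ _ (by have := k1.isLt; omega) (by have := k2.isLt; omega) h1
    have h2 := hmodc _ _ (by have := k1.isLt; omega) (by have := k2.isLt; omega) this
    have := k1.isLt; have := k2.isLt
    exact Fin.ext (by omega)
  set S : Finset V := (Finset.univ.erase j).image u with hS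
  have hScard : S.card = s - 1 := by
    rw [hS, Finset.card_image_of_injective _ huinj,
      Finset.card_erase_of_mem (Finset.mem_univ _), Finset.card_univ, Fintype.card_fin]
  have husmem : ∀ k : Fin s, usucc k ∉ S := by
    intro k hk
    rw [hS, Finset.mem_image] at hk
    obtain ⟨k', _, hk'⟩ := hk
    have : cg (2 * (k : ℕ) + 1) = cg (2 * (k' : ℕ)) := by rw [cgus k, cgu k', hk']
    exact hoe _ _ (by have := k.isLt; omega) (by have := k'.isLt; omega) this
  have hxmem : x₀ ∉ S := by
    intro hk
    rw [hS, Finset.mem_image] at hk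
    obtain ⟨k', _, hk'⟩ := hk
    exact hx0cg _ (by rw [cgu k', hk'])
  have hdisc : ¬ (G.induce ((↑S : Set V)ᶜ)).Connected := by
    intro hcon
    have hA' : usucc i ∈ ((↑S : Set V)ᶜ) := by
      simp only [Set.mem_compl_iff, Finset.mem_coe]
      exact husmem i
    have hB' : x₀ ∈ ((↑S : Set V)ᶜ) := by
      simp only [Set.mem_compl_iff, Finset.mem_coe]
      exact hxmem
    obtain ⟨p⟩ := hcon.preconnected ⟨usucc i, hA'⟩ ⟨x₀, hB'⟩
    have hne : (⟨usucc i, hA'⟩ : ((↑S : Set V)ᶜ : Set V)) ≠ ⟨x₀, hB'⟩ := by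
      intro h
      have h2 : usucc i = x₀ := congrArg Subtype.val h
      apply hx₀
      rw [← h2, ← cgus i]
      exact cg_mem _
    have hlp : 0 < p.length := by
      rcases Nat.eq_zero_or_pos p.length with h | h
      · exact absurd (Walk.eq_of_length_eq_zero h) hne
      · exact h
    have hadj1 := p.adj_getVert_succ (i := 0) hlp
    rw [Walk.getVert_zero] at hadj1
    set y := p.getVert 1 with hy
    have hGadj : G.Adj (usucc i) (y : V) := by
      simpa using hadj1
    obtain ⟨k, hk⟩ := hnbr _ hGadj
    have hkj : k ≠ j := by
      intro h
      rw [h] at hk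
      rw [hk] at hGadj
      exact hnadj hGadj
    have hUk : u k ∈ S := by
      rw [hS]
      exact Finset.mem_image_of_mem _ (Finset.mem_erase.mpr ⟨hkj, Finset.mem_univ _⟩)
    rw [← hk] at hUk
    exact y.2 (Finset.mem_coe.mpr hUk)
  have hmemk : (s - 1) ∈ {k | ∃ S : Finset V, S.card = k ∧
      (¬ (G.induce ((↑S : Set V)ᶜ)).Connected ∨ Fintype.card V ≤ k + 1)} :=
    ⟨S, hScard, Or.inl hdisc⟩
  have hle : vertexConnectivity G ≤ s - 1 := Nat.sInf_le hmemk
  rw [hκ] at hle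
  omega
end
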